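/- arXiv:1911.02763 — 12 statements merged into one kernel-verified Lean document; each statement's English description precedes it below -/
import Mathlib

section
/- Let G be a finite group. If the prime coprime graph Θ(G) contains a cycle (equivalently, its girth is finite), then the girth of Θ(G) equals 3. -/
/-- The prime coprime graph of a (multiplicative) group: two distinct vertices are
adjacent iff the gcd of their orders is `1` or a prime. -/
def pcGraph (G : Type*) [Group G] : SimpleGraph G where
  Adj x y := x ≠ y ∧
    (Nat.gcd (orderOf x) (orderOf y) = 1 ∨ (Nat.gcd (orderOf x) (orderOf y)).Prime)
  symm := ⟨by
    rintro x y ⟨hxy, h⟩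
    exact ⟨hxy.symm, by rwa [Nat.gcd_comm]⟩⟩
  loopless := ⟨fun x h => h.1 rfl⟩

/-- From any cycle in a graph, one can find an edge avoiding a given vertex `o`. -/
lemma exists_adj_ne_of_cycle {V : Type*} {H : SimpleGraph V} {a : V} {c : H.Walk a a}
    (hc : c.IsCycle) (o : V) : ∃ x y : V, H.Adj x y ∧ x ≠ o ∧ y ≠ o := by
  classical
  by_cases ho : o ∈ c.support
  · -- rotate the cycle to start at `o`
    have hc' : (c.rotate o ho).IsCycle := hc.rotate ho
    cases hcc : c.rotate o ho with
    | nil => exact absurd hcc hc'.ne_nil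
    | cons hadj q =>
      rename_i v
      rw [hcc] at hc'
      rw [SimpleGraph.Walk.cons_isCycle_iff] at hc'
      obtain ⟨hq, hne⟩ := hc'
      cases hqq : q with
      | nil =>
        subst hqq
        exact absurd rfl hadj.ne
      | cons hadj2 q2 =>
        rename_i w
        refine ⟨v, w, hadj2, hadj.ne', ?_⟩
        intro hwo
        subst hwo
        rw [hqq] at hq hne
        rw [SimpleGraph.Walk.cons_isPath_iff] at hq
        have : q2 = SimpleGraph.Walk.nil := (SimpleGraph.Walk.isPath_iff_eq_nil (p := q2)).mp hq.1
        subst this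
        simp [Sym2.eq_swap] at hne
  · have h3 := hc.three_le_length
    have hnil : ¬ c.Nil := hc.not_nil
    refine ⟨a, c.getVert 1, SimpleGraph.Walk.adj_snd hnil, ?_, ?_⟩
    · exact fun hao => ho (hao ▸ c.start_mem_support)
    · intro hgo
      exact ho (SimpleGraph.Walk.mem_support_iff_exists_getVert.mpr
        ⟨1, hgo, by omega⟩)

/-- If the girth of the prime coprime graph of a finite group is finite, it equals 3. -/
theorem pcGraph_girth_eq_three (G : Type*) [Group G] [Finite G]
    (h : (pcGraph G).egirth ≠ ⊤) : (pcGraph G).egirth = 3 := by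
  have hna : ¬ (pcGraph G).IsAcyclic := fun ha => h ha.egirth_eq_top
  rw [SimpleGraph.IsAcyclic] at hna
  push_neg at hna
  obtain ⟨a, c, hc⟩ := hna
  obtain ⟨x, y, hxy, hx, hy⟩ := exists_adj_ne_of_cycle hc (1 : G)
  -- build a triangle 1 - x - y - 1
  have a1x : (pcGraph G).Adj 1 x := ⟨fun e => hx e.symm, Or.inl (by simp)⟩
  have ay1 : (pcGraph G).Adj y 1 := ⟨hy, Or.inl (by simp)⟩
  set t : (pcGraph G).Walk 1 1 :=
    SimpleGraph.Walk.cons a1x (SimpleGraph.Walk.cons hxy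
      (SimpleGraph.Walk.cons ay1 SimpleGraph.Walk.nil)) with ht
  have htc : t.IsCycle := by
    rw [ht, SimpleGraph.Walk.cons_isCycle_iff]
    constructor
    · simp [SimpleGraph.Walk.cons_isPath_iff, hxy.ne, hx, hy]
    · intro hmem
      simp only [SimpleGraph.Walk.edges_cons, SimpleGraph.Walk.edges_nil,
        List.mem_cons, List.not_mem_nil, or_false] at hmem
      rcases hmem with h1 | h1
      · rw [Sym2.eq_iff] at h1
        rcases h1 with ⟨h1, _⟩ | ⟨h1, _⟩
        · exact hx h1.symm
        · exact hy h1.symm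
      · rw [Sym2.eq_iff] at h1
        rcases h1 with ⟨h1, _⟩ | ⟨_, h2⟩
        · exact hy h1.symm
        · exact hxy.ne h2
  have hle : (pcGraph G).egirth ≤ 3 := by
    have : (pcGraph G).egirth ≤ (t.length : ℕ∞) :=
      iInf_le_of_le 1 (iInf_le_of_le t (iInf_le _ htc))
    simpa [ht] using this
  exact le_antisymm hle SimpleGraph.three_le_egirth
end

section
/- Let G be a finite group. The prime coprime graph Θ(G) is a complete graph if and only if G has no element of composite order, i.e., if and only if every element of G has order equal to 1 or to a prime number. -/
/-- The prime coprime graph of a finite group is complete iff the group has no element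
of composite order, i.e. every element has order 1 or prime. -/
theorem pcGraph_complete_iff (G : Type*) [Group G] [Finite G] :
    pcGraph G = ⊤ ↔ ∀ x : G, orderOf x = 1 ∨ (orderOf x).Prime := by
  constructor
  · intro h x
    by_cases hx : x = x⁻¹
    · have h2 : x ^ 2 = 1 := by
        rw [pow_two]; nth_rewrite 2 [hx]; exact mul_inv_cancel x
      rcases (Nat.dvd_prime Nat.prime_two).mp (orderOf_dvd_of_pow_eq_one h2) with h1 | h2
      · exact Or.inl h1
      · exact Or.inr (h2 ▸ Nat.prime_two)
    · have hadj : (pcGraph G).Adj x x⁻¹ := by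
        rw [h]; exact hx
      obtain ⟨-, hg⟩ := hadj
      rw [orderOf_inv, Nat.gcd_self] at hg
      exact hg
  · intro h
    ext x y
    simp only [SimpleGraph.top_adj, pcGraph]
    constructor
    · exact fun h => h.1
    · intro hxy
      refine ⟨hxy, ?_⟩
      rcases h x with hx | hx
      · left; simp [hx]
      rcases h y with hy | hy
      · left; simp [hy]
      rcases hx.eq_one_or_self_of_dvd (Nat.gcd (orderOf x) (orderOf y))
          (Nat.gcd_dvd_left _ _) with hg | hg
      · exact Or.inl hg
      · right; rw [hg]; exact hx
end

section
/- Let n ≥ 2 be a natural number. The prime coprime graph Θ(ℤ_n) of the cyclic group ℤ_n = ℤ/nℤ is a complete graph if and only if n is a prime number. -/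
/-- The prime coprime graph of an additive group: two distinct vertices are
adjacent iff the gcd of their (additive) orders is `1` or a prime. -/
def pcGraphAdd (G : Type*) [AddGroup G] : SimpleGraph G where
  Adj x y := x ≠ y ∧
    (Nat.gcd (addOrderOf x) (addOrderOf y) = 1 ∨ (Nat.gcd (addOrderOf x) (addOrderOf y)).Prime)
  symm := ⟨by
    rintro x y ⟨hxy, h⟩
    exact ⟨hxy.symm, by rwa [Nat.gcd_comm]⟩⟩
  loopless := ⟨fun x h => h.1 rfl⟩

/-- For n ≥ 2, the prime coprime graph of the cyclic group ℤ/nℤ is complete iff n is prime. -/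
theorem pcGraph_zmod_complete_iff (n : ℕ) (hn : 2 ≤ n) :
    pcGraphAdd (ZMod n) = ⊤ ↔ n.Prime := by
  constructor
  · intro h
    by_contra hp
    have h2 : n ≠ 2 := fun e => hp (e ▸ Nat.prime_two)
    have h3 : n ≠ 3 := fun e => hp (e ▸ Nat.prime_three)
    have h4 : 2 < n := by omega
    haveI : Fact (2 < n) := ⟨h4⟩
    haveI : NeZero n := ⟨by omega⟩
    have hne : (1 : ZMod n) ≠ -1 := (ZMod.neg_one_ne_one).symm
    have hadj : (pcGraphAdd (ZMod n)).Adj 1 (-1) := by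
      rw [h]; exact hne
    have ho1 : addOrderOf (1 : ZMod n) = n := ZMod.addOrderOf_one n
    have ho2 : addOrderOf (-1 : ZMod n) = n := by rw [addOrderOf_neg, ho1]
    rcases hadj.2 with hg | hg
    · rw [ho1, ho2, Nat.gcd_self] at hg; omega
    · rw [ho1, ho2, Nat.gcd_self] at hg; exact hp hg
  · intro hp
    haveI : NeZero n := ⟨hp.ne_zero⟩
    ext x y
    simp only [SimpleGraph.top_adj]
    constructor
    · exact fun h => h.1
    · intro hxy
      refine ⟨hxy, ?_⟩
      have hx : addOrderOf x ∣ n := by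
        simpa [ZMod.card] using addOrderOf_dvd_card (x := x)
      have hy : addOrderOf y ∣ n := by
        simpa [ZMod.card] using addOrderOf_dvd_card (x := y)
      rcases (Nat.Prime.eq_one_or_self_of_dvd hp _ hx) with hx1 | hxn
      · left; rw [hx1, Nat.gcd_one_left]
      · rcases (Nat.Prime.eq_one_or_self_of_dvd hp _ hy) with hy1 | hyn
        · left; rw [hy1, Nat.gcd_one_right]
        · right; rw [hxn, hyn, Nat.gcd_self]; exact hp
end

section
/- Let p be a prime, let m > 1 be a natural number, and let G be a finite commutative group of order p^m. The prime coprime graph Θ(G) is a complete graph if and only if G is isomorphic to the direct product (ℤ_p)^m of m copies of the cyclic group of order p. -/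
lemma pcGraph_complete_of_orders (p : ℕ) (hp : p.Prime) (G : Type*) [Group G]
    (h : ∀ x : G, orderOf x ∣ p) : pcGraph G = ⊤ := by
  ext x y
  simp only [pcGraph, SimpleGraph.top_adj]
  refine ⟨fun h => h.1, fun hxy => ⟨hxy, ?_⟩⟩
  rcases (Nat.dvd_prime hp).1 (h x) with hx | hx <;>
    rcases (Nat.dvd_prime hp).1 (h y) with hy | hy <;>
    simp [hx, hy, Nat.gcd_self, hp]

/-- For a finite commutative group G of order p^m (p prime, m > 1), the prime coprime
graph Θ(G) is complete iff G is isomorphic to (ℤ_p)^m. -/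
theorem pcGraph_commGroup_complete_iff (p m : ℕ) (hp : p.Prime) (hm : 1 < m)
    (G : Type*) [CommGroup G] [Fintype G] (hcard : Fintype.card G = p ^ m) :
    pcGraph G = ⊤ ↔ Nonempty (G ≃* Multiplicative (Fin m → ZMod p)) := by
  haveI := Fact.mk hp
  constructor
  · intro h
    -- every element has order dividing p
    have horders : ∀ x : G, orderOf x ∣ p := by
      intro x
      have hdvd : orderOf x ∣ p ^ m := hcard ▸ orderOf_dvd_card
      obtain ⟨k, hk, hord⟩ := (Nat.dvd_prime_pow hp).1 hdvd
      rcases Nat.lt_or_ge k 2 with hk2 | hk2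
      · interval_cases k
        · simp [hord]
        · simp [hord]
      · exfalso
        have hxne : x ≠ x⁻¹ := by
          intro heq
          have : orderOf x ∣ 2 := orderOf_dvd_of_pow_eq_one (by
            rw [pow_two]; nth_rewrite 2 [heq]; simp)
          rw [hord] at this
          have h4 : 4 ≤ p ^ k :=
            le_trans (by nlinarith [hp.two_le] : 4 ≤ p ^ 2)
              (Nat.pow_le_pow_right hp.pos hk2)
          have := Nat.le_of_dvd (by norm_num) this
          omega
        have hadj : (pcGraph G).Adj x x⁻¹ := by rw [h]; exact hxne
        have hk0 : k ≠ 0 := by omega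
        have hgt : 1 < p ^ k := Nat.one_lt_pow hk0 hp.one_lt
        have hplt : p < p ^ k := by
          calc p = p ^ 1 := (pow_one p).symm
          _ < p ^ k := Nat.pow_lt_pow_right hp.one_lt (by omega)
        rcases hadj.2 with hg | hg <;>
          rw [orderOf_inv, Nat.gcd_self, hord] at hg
        · omega
        · rcases hg.eq_one_or_self_of_dvd p (dvd_pow_self p hk0) with h1 | h1
          · exact absurd h1 (by have := hp.one_lt; omega)
          · exact absurd h1 (Nat.ne_of_lt hplt)
    -- build the module structure
    have hsmul : ∀ x : Additive G, p • x = 0 := by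
      intro x
      have : (Additive.toMul x) ^ p = 1 :=
        orderOf_dvd_iff_pow_eq_one.1 (horders (Additive.toMul x))
      exact this
    letI i1 : Module (ZMod p) (Additive G) := AddCommGroup.zmodModule hsmul
    haveI i2 : Module.Finite (ZMod p) (Additive G) := Module.Finite.of_finite (R := ZMod p)
    haveI i3 : Module.Free (ZMod p) (Additive G) := Module.Free.of_divisionRing (ZMod p) (Additive G)
    have hcard' : Fintype.card (Additive G) = p ^ Module.finrank (ZMod p) (Additive G) := by
      rw [Module.card_eq_pow_finrank (K := ZMod p) (V := Additive G), ZMod.card]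
    have hrank : Module.finrank (ZMod p) (Additive G) = m := by
      have h2 : p ^ Module.finrank (ZMod p) (Additive G) = p ^ m := by
        rw [← hcard']; exact (Fintype.card_congr Additive.toMul).trans hcard
      exact Nat.pow_right_injective hp.two_le h2
    let b := @Module.finBasis (ZMod p) (Additive G) _ _ i1 i3 _ i2
    let e : Additive G ≃ₗ[ZMod p] (Fin m → ZMod p) := (b.reindex (finCongr hrank)).equivFun
    exact ⟨AddEquiv.toMultiplicativeRight e.toAddEquiv⟩
  · rintro ⟨e⟩
    apply pcGraph_complete_of_orders p hp
    intro x
    apply orderOf_dvd_of_pow_eq_one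
    apply e.injective
    rw [map_pow, map_one]
    have : (Multiplicative.toAdd (e x)) = Multiplicative.toAdd (e x) := rfl
    show (e x) ^ p = 1
    have : p • (Multiplicative.toAdd (e x)) = 0 := by
      funext i
      show p • (Multiplicative.toAdd (e x) i) = 0
      rw [nsmul_eq_mul]
      simp [ZMod.natCast_self]
    exact this
end

section
/- Let n be a composite natural number and let S = S(ℤ_n) be the set of elements of ℤ_n whose additive order is 1 or a prime number. Then S is a minimum separating set of the prime coprime graph Θ(ℤ_n): the subgraph of Θ(ℤ_n) induced on the complement of S is disconnected, while for every set T of vertices with |T| < |S|, the subgraph induced on the complement of T is connected. Consequently the vertex connectivity of Θ(ℤ_n) equals |S(ℤ_n)|. -/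
/-- The vertex connectivity of a graph: the minimum number of vertices whose removal
results in a disconnected or trivial (subsingleton) graph. -/
noncomputable def vertexConnectivity {V : Type*} (G : SimpleGraph V) : ℕ :=
  sInf {k | ∃ T : Set V,
    T.ncard = k ∧ (¬ (SimpleGraph.induce Tᶜ G).Connected ∨ Tᶜ.Subsingleton)}

/-- A set containing a vertex adjacent to everything else induces a connected graph. -/
lemma induce_connected_of_universal {V : Type*} (G : SimpleGraph V) (W : Set V)
    (s : V) (hs : s ∈ W) (huniv : ∀ y, y ≠ s → G.Adj s y) :
    (SimpleGraph.induce W G).Connected := by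
  rw [SimpleGraph.connected_iff]
  have key : ∀ a : W, (SimpleGraph.induce W G).Reachable ⟨s, hs⟩ a := by
    intro a
    by_cases h : (a : V) = s
    · have : a = ⟨s, hs⟩ := Subtype.ext h
      rw [this]
    · exact SimpleGraph.Adj.reachable (by exact huniv a h)
  exact ⟨fun a b => (key a).symm.trans (key b), ⟨⟨s, hs⟩⟩⟩

lemma exists_adj_of_reachable {V : Type*} {G : SimpleGraph V} {a b : V}
    (h : G.Reachable a b) (hne : a ≠ b) : ∃ c, G.Adj a c := by
  obtain ⟨w⟩ := h
  cases w with
  | nil => exact absurd rfl hne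
  | cons h p => exact ⟨_, h⟩

/-- For composite n, the set S of elements of ℤ/nℤ of order 1 or prime order is a
minimum separating set of the prime coprime graph, and the vertex connectivity
equals |S|. -/
theorem pcGraph_zmod_vertexConnectivity (n : ℕ) (hn : 1 < n) (hnp : ¬ n.Prime) :
    let S : Set (ZMod n) := {x | addOrderOf x = 1 ∨ (addOrderOf x).Prime}
    ¬ (SimpleGraph.induce Sᶜ (pcGraphAdd (ZMod n))).Connected ∧
    (∀ T : Set (ZMod n), T.ncard < S.ncard →
      (SimpleGraph.induce Tᶜ (pcGraphAdd (ZMod n))).Connected) ∧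
    vertexConnectivity (pcGraphAdd (ZMod n)) = S.ncard := by
  intro S
  haveI : NeZero n := ⟨by omega⟩
  -- every element orders divide n
  have hdvd : ∀ x : ZMod n, addOrderOf x ∣ n := by
    intro x
    have := addOrderOf_dvd_card (x := x)
    rwa [ZMod.card n] at this
  -- elements of S are universal vertices
  have huniv : ∀ s ∈ S, ∀ y : ZMod n, y ≠ s → (pcGraphAdd (ZMod n)).Adj s y := by
    intro s hs y hy
    refine ⟨hy.symm, ?_⟩
    rcases hs with h1 | hp
    · left; rw [h1, Nat.gcd_one_left]
    · rcases (Nat.Prime.eq_one_or_self_of_dvd hp _ (Nat.gcd_dvd_left (addOrderOf s)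
        (addOrderOf y))) with h | h
      · left; exact h
      · right; rw [h]; exact hp
  -- 1 and -1 are in Sᶜ
  have hord1 : addOrderOf (1 : ZMod n) = n := ZMod.addOrderOf_one n
  have hordm1 : addOrderOf (-1 : ZMod n) = n := by rw [addOrderOf_neg]; exact hord1
  have h1c : (1 : ZMod n) ∈ Sᶜ := by
    simp only [Set.mem_compl_iff, S, Set.mem_setOf_eq, hord1]
    push_neg
    exact ⟨by omega, hnp⟩
  have hm1c : (-1 : ZMod n) ∈ Sᶜ := by
    simp only [Set.mem_compl_iff, S, Set.mem_setOf_eq, hordm1]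
    push_neg
    exact ⟨by omega, hnp⟩
  have hne : (1 : ZMod n) ≠ -1 := by
    intro h
    have h2 : ((2 : ℕ) : ZMod n) = 0 := by push_cast; linear_combination h
    have hd2 := (ZMod.natCast_eq_zero_iff 2 n).mp h2
    rcases (Nat.dvd_prime Nat.prime_two).mp hd2 with h | h
    · omega
    · exact hnp (h ▸ Nat.prime_two)
  -- 1 is isolated in Sᶜ
  have hiso : ∀ y : ZMod n, y ∈ Sᶜ → ¬ (pcGraphAdd (ZMod n)).Adj 1 y := by
    intro y hy hadj
    have hyd : addOrderOf y ∣ n := hdvd y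
    have hg : Nat.gcd (addOrderOf (1 : ZMod n)) (addOrderOf y) = addOrderOf y := by
      rw [hord1]; exact Nat.gcd_eq_right hyd
    rcases hadj.2 with h | h
    · rw [hg] at h
      exact hy (Or.inl h)
    · rw [hg] at h
      exact hy (Or.inr h)
  -- Part 1: Sᶜ induces a disconnected graph
  have part1 : ¬ (SimpleGraph.induce Sᶜ (pcGraphAdd (ZMod n))).Connected := by
    intro hconn
    obtain ⟨c, hc⟩ := exists_adj_of_reachable
      (hconn.preconnected ⟨1, h1c⟩ ⟨-1, hm1c⟩)
      (fun h => hne (congrArg Subtype.val h))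
    exact hiso c c.2 hc
  -- Part 2
  have part2 : ∀ T : Set (ZMod n), T.ncard < S.ncard →
      (SimpleGraph.induce Tᶜ (pcGraphAdd (ZMod n))).Connected := by
    intro T hT
    have : ¬ S ⊆ T := by
      intro hsub
      exact absurd (Set.ncard_le_ncard hsub (Set.toFinite T)) (by omega)
    obtain ⟨s, hsS, hsT⟩ := Set.not_subset.mp this
    exact induce_connected_of_universal _ Tᶜ s hsT (huniv s hsS)
  refine ⟨part1, part2, ?_⟩
  -- cardinality facts
  have hcard : Nat.card (ZMod n) = n := by simp [Nat.card_eq_fintype_card, ZMod.card]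
  have hScompl2 : 2 ≤ Sᶜ.ncard := by
    rw [show (2 : ℕ) = ({1, -1} : Set (ZMod n)).ncard by
      rw [Set.ncard_pair hne]]
    exact Set.ncard_le_ncard (by intro x hx; rcases hx with h | h <;> subst h <;> assumption)
      (Set.toFinite _)
  have hSsum : S.ncard + Sᶜ.ncard = n := by
    rw [Set.ncard_add_ncard_compl, hcard]
  -- Part 3
  unfold vertexConnectivity
  apply le_antisymm
  · exact Nat.sInf_le ⟨S, rfl, Or.inl part1⟩
  · refine le_csInf ⟨S.ncard, ⟨S, rfl, Or.inl part1⟩⟩ ?_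
    rintro k ⟨T, hTk, hT⟩
    by_contra hlt
    push_neg at hlt
    subst hTk
    rcases hT with hd | hsub
    · exact hd (part2 T hlt)
    · have hTsum : T.ncard + Tᶜ.ncard = n := by
        rw [Set.ncard_add_ncard_compl, hcard]
      have : Tᶜ.ncard ≤ 1 := by
        rcases Set.Subsingleton.eq_empty_or_singleton hsub with h | ⟨a, h⟩
        · simp [h]
        · simp [h]
      omega
end

section
/- Let p and q be distinct primes with p < q, and let S = S(ℤ_{pq}) be the set of elements of ℤ_{pq} whose additive order is 1 or a prime number. Then |S| = p + q − 1, and the vertex connectivity of the prime coprime graph Θ(ℤ_{pq}) equals p + q − 1: removing the p + q − 1 vertices of S disconnects Θ(ℤ_{pq}), while removing any set of fewer than p + q − 1 vertices leaves a connected graph. -/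
section aux

lemma dvd_pq_cases {p q d : ℕ} (hp : p.Prime) (hq : q.Prime) (hne : p ≠ q)
    (hd : d ∣ p * q) : d = 1 ∨ d = p ∨ d = q ∨ d = p * q := by
  have hco : Nat.Coprime p q := (Nat.coprime_primes hp hq).mpr hne
  by_cases hpd : p ∣ d <;> by_cases hqd : q ∣ d
  · exact Or.inr <| Or.inr <| Or.inr <|
      Nat.dvd_antisymm hd (Nat.Coprime.mul_dvd_of_dvd_of_dvd hco hpd hqd)
  · have hcd : Nat.Coprime d q := ((hq.coprime_iff_not_dvd).mpr hqd).symm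
    exact Or.inr <| Or.inl <| Nat.dvd_antisymm (hcd.dvd_of_dvd_mul_right hd) hpd
  · have hcd : Nat.Coprime d p := ((hp.coprime_iff_not_dvd).mpr hpd).symm
    exact Or.inr <| Or.inr <| Or.inl <|
      Nat.dvd_antisymm (hcd.dvd_of_dvd_mul_left hd) hqd
  · have hcd : Nat.Coprime d (p * q) :=
      Nat.Coprime.mul_right ((hp.coprime_iff_not_dvd).mpr hpd).symm
        ((hq.coprime_iff_not_dvd).mpr hqd).symm
    exact Or.inl (Nat.eq_one_of_dvd_one (hcd ▸ Nat.dvd_gcd dvd_rfl hd))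

lemma isUnit_iff_order {p q : ℕ} (hp : p.Prime) (hq : q.Prime) (x : ZMod (p * q)) :
    IsUnit x ↔ addOrderOf x = p * q := by
  have hn0 : p * q ≠ 0 := Nat.mul_ne_zero hp.pos.ne' hq.pos.ne'
  haveI : NeZero (p * q) := ⟨hn0⟩
  have hx : ((x.val : ℕ) : ZMod (p * q)) = x := by
    rw [ZMod.natCast_val, ZMod.cast_id]
  rw [← hx, ZMod.isUnit_iff_coprime, ZMod.addOrderOf_coe _ hn0]
  have hgd : Nat.gcd (p * q) (x.val) ∣ p * q := Nat.gcd_dvd_left _ _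
  constructor
  · intro h
    rw [Nat.Coprime, Nat.gcd_comm] at h
    rw [h, Nat.div_one]
  · intro h
    rcases (Nat.div_eq_self).mp h with h' | h'
    · exact absurd h' hn0
    · rwa [Nat.Coprime, Nat.gcd_comm]

lemma order_dichotomy {p q : ℕ} (hp : p.Prime) (hq : q.Prime) (hne : p ≠ q)
    (x : ZMod (p * q)) :
    (addOrderOf x = 1 ∨ (addOrderOf x).Prime) ↔ ¬ IsUnit x := by
  have hn0 : p * q ≠ 0 := Nat.mul_ne_zero hp.pos.ne' hq.pos.ne'
  haveI : NeZero (p * q) := ⟨hn0⟩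
  rw [isUnit_iff_order hp hq]
  have hdvd : addOrderOf x ∣ p * q := by
    have := addOrderOf_dvd_natCard x
    rwa [Nat.card_zmod] at this
  constructor
  · rintro (h | h) hpq
    · rw [hpq] at h
      exact hp.ne_one (Nat.eq_one_of_mul_eq_one_right h)
    · rw [hpq] at h
      exact Nat.not_prime_mul hp.ne_one hq.ne_one h
  · intro h
    rcases dvd_pq_cases hp hq hne hdvd with h1 | h1 | h1 | h1
    · exact Or.inl h1
    · exact Or.inr (by rw [h1]; exact hp)
    · exact Or.inr (by rw [h1]; exact hq)
    · exact absurd h1 h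

end aux

section main

variable {p q : ℕ}

lemma key_arith (hp : p.Prime) (hq : q.Prime) :
    (p - 1) * (q - 1) + (p + q - 1) = p * q := by
  obtain ⟨a, rfl⟩ := Nat.exists_eq_add_of_le hp.two_le
  obtain ⟨b, rfl⟩ := Nat.exists_eq_add_of_le hq.two_le
  have e1 : 2 + a - 1 = 1 + a := by omega
  have e2 : 2 + b - 1 = 1 + b := by omega
  have e3 : 2 + a + (2 + b) - 1 = 3 + a + b := by omega
  rw [e1, e2, e3]; ring

lemma compl_eq (hp : p.Prime) (hq : q.Prime) (hne : p ≠ q) :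
    {x : ZMod (p * q) | addOrderOf x = 1 ∨ (addOrderOf x).Prime}ᶜ = Set.range
      (Units.val : (ZMod (p * q))ˣ → ZMod (p * q)) := by
  ext x
  simp only [Set.mem_compl_iff, Set.mem_setOf_eq, order_dichotomy hp hq hne, not_not,
    Set.mem_range]
  exact ⟨fun ⟨u, hu⟩ => ⟨u, hu⟩, fun ⟨u, hu⟩ => ⟨u, hu⟩⟩

lemma card_compl (hp : p.Prime) (hq : q.Prime) (hne : p ≠ q) :
    ({x : ZMod (p * q) | addOrderOf x = 1 ∨ (addOrderOf x).Prime}ᶜ).ncard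
      = (p - 1) * (q - 1) := by
  haveI : NeZero (p * q) := ⟨Nat.mul_ne_zero hp.pos.ne' hq.pos.ne'⟩
  rw [compl_eq hp hq hne, ← Nat.card_coe_set_eq,
    Nat.card_range_of_injective Units.val_injective, Nat.card_eq_fintype_card,
    ZMod.card_units_eq_totient,
    Nat.totient_mul ((Nat.coprime_primes hp hq).mpr hne),
    Nat.totient_prime hp, Nat.totient_prime hq]

lemma card_S (hp : p.Prime) (hq : q.Prime) (hne : p ≠ q) :
    ({x : ZMod (p * q) | addOrderOf x = 1 ∨ (addOrderOf x).Prime}).ncard = p + q - 1 := by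
  haveI : NeZero (p * q) := ⟨Nat.mul_ne_zero hp.pos.ne' hq.pos.ne'⟩
  have h1 := Set.ncard_add_ncard_compl
    ({x : ZMod (p * q) | addOrderOf x = 1 ∨ (addOrderOf x).Prime})
  rw [card_compl hp hq hne, Nat.card_zmod] at h1
  have h2 := key_arith hp hq
  linarith

lemma adj_of_mem_S (x y : ZMod (p * q))
    (hx : addOrderOf x = 1 ∨ (addOrderOf x).Prime) (hxy : x ≠ y) :
    (pcGraphAdd (ZMod (p * q))).Adj x y := by
  refine ⟨hxy, ?_⟩
  rcases hx with h | h
  · left; rw [h]; exact Nat.gcd_one_left _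
  · rcases h.eq_one_or_self_of_dvd _ (Nat.gcd_dvd_left _ _) with h1 | h1
    · exact Or.inl h1
    · right; rw [h1]; exact h

lemma not_adj_of_not_mem_S (hp : p.Prime) (hq : q.Prime) (hne : p ≠ q)
    (x y : ZMod (p * q))
    (hx : ¬ (addOrderOf x = 1 ∨ (addOrderOf x).Prime))
    (hy : ¬ (addOrderOf y = 1 ∨ (addOrderOf y).Prime)) :
    ¬ (pcGraphAdd (ZMod (p * q))).Adj x y := by
  have hxo : addOrderOf x = p * q := (isUnit_iff_order hp hq x).mp
    (not_not.mp (fun h => hx ((order_dichotomy hp hq hne x).mpr h)))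
  have hyo : addOrderOf y = p * q := (isUnit_iff_order hp hq y).mp
    (not_not.mp (fun h => hy ((order_dichotomy hp hq hne y).mpr h)))
  rintro ⟨-, h | h⟩ <;> rw [hxo, hyo, Nat.gcd_self] at h
  · exact hp.ne_one (Nat.eq_one_of_mul_eq_one_right h)
  · exact Nat.not_prime_mul hp.ne_one hq.ne_one h

end main

lemma reachable_eq_of_no_adj {V : Type*} {G : SimpleGraph V}
    (h : ∀ u v, ¬ G.Adj u v) {u v : V} (hr : G.Reachable u v) : u = v := by
  obtain ⟨w⟩ := hr
  cases w with
  | nil => rfl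
  | cons h' _ => exact absurd h' (h _ _)

/-- For distinct primes p < q, the set S of elements of ℤ/pqℤ of order 1 or prime order
has p + q - 1 elements; removing S disconnects the prime coprime graph while removing
fewer than p + q - 1 vertices leaves it connected, so its vertex connectivity is
p + q - 1. -/
theorem pcGraph_zmod_pq_vertexConnectivity (p q : ℕ) (hp : p.Prime) (hq : q.Prime)
    (hpq : p < q) :
    let S : Set (ZMod (p * q)) := {x | addOrderOf x = 1 ∨ (addOrderOf x).Prime}
    S.ncard = p + q - 1 ∧
    ¬ (SimpleGraph.induce Sᶜ (pcGraphAdd (ZMod (p * q)))).Connected ∧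
    (∀ T : Set (ZMod (p * q)), T.ncard < p + q - 1 →
      (SimpleGraph.induce Tᶜ (pcGraphAdd (ZMod (p * q)))).Connected) ∧
    vertexConnectivity (pcGraphAdd (ZMod (p * q))) = p + q - 1 := by
  intro S
  have hne : p ≠ q := hpq.ne
  haveI : NeZero (p * q) := ⟨Nat.mul_ne_zero hp.pos.ne' hq.pos.ne'⟩
  have h3 := key_arith hp hq
  have h4 : 2 ≤ (p - 1) * (q - 1) := by
    have hp2 := hp.two_le
    have hq2 := hq.two_le
    calc 2 = 1 * 2 := by norm_num
      _ ≤ (p - 1) * (q - 1) := Nat.mul_le_mul (by omega) (by omega)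
  have hScard : S.ncard = p + q - 1 := card_S hp hq hne
  have hdisc : ¬ (SimpleGraph.induce Sᶜ (pcGraphAdd (ZMod (p * q)))).Connected := by
    intro hcon
    have h2 : 1 < Sᶜ.ncard := by
      rw [card_compl hp hq hne]; omega
    obtain ⟨a, ha, b, hb, hab⟩ := (Set.one_lt_ncard (Set.toFinite _)).mp h2
    have hnoadj : ∀ u v : ↥Sᶜ, ¬ (SimpleGraph.induce Sᶜ (pcGraphAdd (ZMod (p * q)))).Adj u v := by
      rintro ⟨u, hu⟩ ⟨v, hv⟩ hadj
      exact not_adj_of_not_mem_S hp hq hne u v hu hv hadj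
    have := reachable_eq_of_no_adj hnoadj (hcon.preconnected ⟨a, ha⟩ ⟨b, hb⟩)
    exact hab (congrArg Subtype.val this)
  have hpart3 : ∀ T : Set (ZMod (p * q)), T.ncard < p + q - 1 →
      (SimpleGraph.induce Tᶜ (pcGraphAdd (ZMod (p * q)))).Connected := by
    intro T hT
    have hsub : ¬ S ⊆ T := fun hsub =>
      absurd (Set.ncard_le_ncard hsub (Set.toFinite T)) (by rw [hScard]; omega)
    obtain ⟨s, hsS, hsT⟩ := Set.not_subset.mp hsub
    rw [SimpleGraph.connected_iff_exists_forall_reachable]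
    refine ⟨⟨s, hsT⟩, ?_⟩
    rintro ⟨w, hw⟩
    by_cases hws : w = s
    · subst hws; exact SimpleGraph.Reachable.refl _
    · exact SimpleGraph.Adj.reachable
        (by exact adj_of_mem_S s w hsS fun h => hws h.symm)
  refine ⟨hScard, hdisc, hpart3, ?_⟩
  unfold vertexConnectivity
  apply le_antisymm
  · exact Nat.sInf_le ⟨S, hScard, Or.inl hdisc⟩
  · refine le_csInf ⟨p + q - 1, ⟨S, hScard, Or.inl hdisc⟩⟩ ?_
    rintro k ⟨T, rfl, hT | hT⟩
    · by_contra hlt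
      push_neg at hlt
      exact hT (hpart3 T hlt)
    · have h1 : Tᶜ.ncard ≤ 1 := (Set.ncard_le_one (Set.toFinite _)).mpr (fun a ha b hb => hT ha hb)
      have h2 : T.ncard + Tᶜ.ncard = p * q := by
        rw [Set.ncard_add_ncard_compl, Nat.card_zmod]
      linarith
end

section
/- Let p be a prime and let m ≥ 2 be a natural number, and let S = S(ℤ_{p^m}) be the set of elements of ℤ_{p^m} whose additive order is 1 or a prime number. Then |S| = p, and the vertex connectivity of the prime coprime graph Θ(ℤ_{p^m}) equals p: removing the p vertices of S disconnects Θ(ℤ_{p^m}), while removing any set of fewer than p vertices leaves a connected graph. -/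
/-- For a prime p and m ≥ 2, the set S of elements of ℤ/p^mℤ of order 1 or prime order
has p elements; removing S disconnects the prime coprime graph while removing fewer
than p vertices leaves it connected, so its vertex connectivity is p. -/
theorem pcGraph_zmod_prime_pow_vertexConnectivity (p m : ℕ) (hp : p.Prime) (hm : 2 ≤ m) :
    let S : Set (ZMod (p ^ m)) := {x | addOrderOf x = 1 ∨ (addOrderOf x).Prime}
    S.ncard = p ∧
    ¬ (SimpleGraph.induce Sᶜ (pcGraphAdd (ZMod (p ^ m)))).Connected ∧
    (∀ T : Set (ZMod (p ^ m)), T.ncard < p →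
      (SimpleGraph.induce Tᶜ (pcGraphAdd (ZMod (p ^ m)))).Connected) ∧
    vertexConnectivity (pcGraphAdd (ZMod (p ^ m))) = p := by
  intro S
  haveI : NeZero (p ^ m) := ⟨pow_ne_zero m hp.pos.ne'⟩
  haveI : NeZero p := ⟨hp.pos.ne'⟩
  have hpm2 : p ^ 2 ≤ p ^ m := Nat.pow_le_pow_right hp.pos hm
  have hp2 : p < p ^ 2 := by nlinarith [hp.two_le]
  have hplt : p < p ^ m := lt_of_lt_of_le hp2 hpm2
  -- orders divide p ^ m
  have hodvd : ∀ x : ZMod (p ^ m), addOrderOf x ∣ p ^ m := fun x => by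
    simpa [ZMod.card] using (addOrderOf_dvd_card (x := x))
  -- membership characterization
  have hSd : ∀ x : ZMod (p ^ m), x ∈ S ↔ addOrderOf x ∣ p := by
    intro x
    constructor
    · rintro (h1 | hq)
      · rw [h1]; exact one_dvd p
      · exact hq.dvd_of_dvd_pow (hodvd x)
    · intro hdvd
      rcases (Nat.dvd_prime hp).mp hdvd with h1 | h1
      · exact Or.inl h1
      · exact Or.inr (by rw [h1]; exact hp)
  have hSmem : ∀ x : ZMod (p ^ m), x ∈ S ↔ p • x = 0 := fun x =>
    (hSd x).trans addOrderOf_dvd_iff_nsmul_eq_zero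
  -- elements not in S have order divisible by p^2
  have hbig : ∀ x : ZMod (p ^ m), x ∉ S → p ^ 2 ∣ addOrderOf x := by
    intro x hx
    obtain ⟨k, hk, hke⟩ := (Nat.dvd_prime_pow hp).mp (hodvd x)
    have h2k : 2 ≤ k := by
      by_contra hlt
      push_neg at hlt
      interval_cases k
      · exact hx (Or.inl (by simpa using hke))
      · exact hx (Or.inr (by rw [hke, pow_one]; exact hp))
    rw [hke]
    exact pow_dvd_pow p h2k
  -- members of S are adjacent to everything else
  have hadj : ∀ s x : ZMod (p ^ m), s ∈ S → x ≠ s →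
      (pcGraphAdd (ZMod (p ^ m))).Adj s x := by
    intro s x hs hxs
    show s ≠ x ∧ _
    refine ⟨hxs.symm, ?_⟩
    have : Nat.gcd (addOrderOf s) (addOrderOf x) ∣ p :=
      dvd_trans (Nat.gcd_dvd_left _ _) ((hSd s).mp hs)
    rcases (Nat.dvd_prime hp).mp this with h1 | h1
    · exact Or.inl h1
    · exact Or.inr (by rw [h1]; exact hp)
  -- no edges outside S
  have hnadj : ∀ x y : ZMod (p ^ m), x ∉ S → y ∉ S →
      ¬ (pcGraphAdd (ZMod (p ^ m))).Adj x y := by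
    rintro x y hx hy ⟨_, hg⟩
    have hd : p ^ 2 ∣ Nat.gcd (addOrderOf x) (addOrderOf y) :=
      Nat.dvd_gcd (hbig x hx) (hbig y hy)
    rcases hg with h1 | h1
    · rw [h1] at hd
      have := Nat.le_of_dvd one_pos hd
      nlinarith [hp.two_le]
    · have hpd : p ∣ Nat.gcd (addOrderOf x) (addOrderOf y) :=
        dvd_trans (dvd_pow_self p two_ne_zero) hd
      have hpe : p = Nat.gcd (addOrderOf x) (addOrderOf y) :=
        (Nat.prime_dvd_prime_iff_eq hp h1).mp hpd
      rw [← hpe] at hd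
      have := Nat.le_of_dvd hp.pos hd
      nlinarith [hp.two_le]
  -- the counting: S ≃ ZMod p
  have hScard : S.ncard = p := by
    classical
    set f : ZMod p → ZMod (p ^ m) := fun k => ((p ^ (m - 1) * k.val : ℕ) : ZMod (p ^ m))
      with hf
    have hmem : ∀ k, f k ∈ S := by
      intro k
      rw [hSmem]
      have hn : p * (p ^ (m - 1) * k.val) = p ^ m * k.val := by
        rw [← mul_assoc, ← pow_succ']
        congr 2
        omega
      rw [hf, nsmul_eq_mul, ← Nat.cast_mul, hn, Nat.cast_mul, ZMod.natCast_self, zero_mul]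
    have hinj : Function.Injective f := by
      intro a b hab
      have ha : (p ^ (m - 1) * a.val) < p ^ m := by
        calc p ^ (m - 1) * a.val < p ^ (m - 1) * p :=
              (Nat.mul_lt_mul_left (pow_pos hp.pos _)).mpr (ZMod.val_lt a)
          _ = p ^ m := by rw [← pow_succ]; congr 1; omega
      have hb : (p ^ (m - 1) * b.val) < p ^ m := by
        calc p ^ (m - 1) * b.val < p ^ (m - 1) * p :=
              (Nat.mul_lt_mul_left (pow_pos hp.pos _)).mpr (ZMod.val_lt b)
          _ = p ^ m := by rw [← pow_succ]; congr 1; omega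
      have := congrArg ZMod.val hab
      rw [hf] at this
      simp only [ZMod.val_cast_of_lt ha, ZMod.val_cast_of_lt hb] at this
      have hv : a.val = b.val :=
        Nat.eq_of_mul_eq_mul_left (pow_pos hp.pos _) this
      exact ZMod.val_injective p hv
    have hsurj : ∀ x ∈ S, ∃ k, f k = x := by
      intro x hx
      rw [hSmem] at hx
      have hx' : ((p * x.val : ℕ) : ZMod (p ^ m)) = 0 := by
        push_cast
        rw [ZMod.natCast_val, ZMod.cast_id]
        rw [nsmul_eq_mul] at hx
        exact hx
      have hdvd : p ^ m ∣ p * x.val := (ZMod.natCast_eq_zero_iff _ _).mp hx'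
      have hdvd' : p ^ (m - 1) ∣ x.val := by
        have hsp : p ^ m = p * p ^ (m - 1) := by rw [← pow_succ']; congr 1; omega
        obtain ⟨t, ht⟩ := hdvd
        exact ⟨t, Nat.eq_of_mul_eq_mul_left hp.pos (by rw [ht, hsp]; ring)⟩
      obtain ⟨c, hc⟩ := hdvd'
      have hclt : c < p := by
        by_contra hge
        push_neg at hge
        have : p ^ m ≤ x.val := by
          calc p ^ m = p ^ (m - 1) * p := by rw [← pow_succ]; congr 1; omega
            _ ≤ p ^ (m - 1) * c := Nat.mul_le_mul_left _ hge
            _ = x.val := hc.symm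
        exact absurd (ZMod.val_lt x) (not_lt.mpr this)
      refine ⟨(c : ZMod p), ?_⟩
      rw [hf]
      simp only [ZMod.val_cast_of_lt hclt]
      calc ((p ^ (m - 1) * c : ℕ) : ZMod (p ^ m)) = ((x.val : ℕ) : ZMod (p ^ m)) := by
            rw [hc]
        _ = x := by rw [ZMod.natCast_val, ZMod.cast_id]
    have he : Nat.card (ZMod p) = Nat.card S := by
      refine Nat.card_eq_of_bijective (fun k => (⟨f k, hmem k⟩ : S)) ⟨?_, ?_⟩
      · intro a b hab
        exact hinj (congrArg Subtype.val hab)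
      · rintro ⟨x, hx⟩
        obtain ⟨k, hk⟩ := hsurj x hx
        exact ⟨k, Subtype.ext hk⟩
    rw [← Nat.card_coe_set_eq, ← he, Nat.card_zmod]
  -- 1 and -1 are not in S
  have h1S : (1 : ZMod (p ^ m)) ∉ S := by
    rw [hSmem]
    intro h
    rw [nsmul_eq_mul, mul_one] at h
    have hd : p ^ m ∣ p := (ZMod.natCast_eq_zero_iff p (p ^ m)).mp h
    exact absurd (Nat.le_of_dvd hp.pos hd) (not_le.mpr hplt)
  have hnegS : (-1 : ZMod (p ^ m)) ∉ S := by
    rw [hSmem]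
    intro h
    rw [nsmul_eq_mul, mul_neg_one, neg_eq_zero] at h
    have hd : p ^ m ∣ p := (ZMod.natCast_eq_zero_iff p (p ^ m)).mp h
    exact absurd (Nat.le_of_dvd hp.pos hd) (not_le.mpr hplt)
  have hne : (1 : ZMod (p ^ m)) ≠ -1 := by
    intro h
    have h2 : (1 : ZMod (p ^ m)) + 1 = 0 := by nth_rewrite 2 [h]; ring
    have h2' : ((2 : ℕ) : ZMod (p ^ m)) = 0 := by
      push_cast
      rw [← one_add_one_eq_two]
      exact h2
    have hd : p ^ m ∣ 2 := (ZMod.natCast_eq_zero_iff 2 (p ^ m)).mp h2'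
    have hle := Nat.le_of_dvd (by norm_num) hd
    have := hp.two_le
    omega
  -- disconnected after removing S
  have hdisc : ¬ (SimpleGraph.induce Sᶜ (pcGraphAdd (ZMod (p ^ m)))).Connected := by
    intro hcon
    have key : ∀ (a b : ↥(Sᶜ))
        (w : (SimpleGraph.induce Sᶜ (pcGraphAdd (ZMod (p ^ m)))).Walk a b), a = b := by
      intro a b w
      induction w with
      | nil => rfl
      | @cons u v _ h _ _ =>
        exact absurd (SimpleGraph.comap_adj.mp h) (hnadj ↑u ↑v u.2 v.2)
    obtain ⟨w⟩ := hcon.preconnected ⟨1, h1S⟩ ⟨-1, hnegS⟩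
    exact hne (congrArg Subtype.val (key _ _ w))
  -- connected after removing fewer than p vertices
  have hconn : ∀ T : Set (ZMod (p ^ m)), T.ncard < p →
      (SimpleGraph.induce Tᶜ (pcGraphAdd (ZMod (p ^ m)))).Connected := by
    intro T hT
    have hTne : ¬ S ⊆ T := by
      intro hsub
      have := Set.ncard_le_ncard hsub (Set.toFinite T)
      omega
    obtain ⟨s, hsS, hsT⟩ := Set.not_subset.mp hTne
    have reach : ∀ a : ↥(Tᶜ),
        (SimpleGraph.induce Tᶜ (pcGraphAdd (ZMod (p ^ m)))).Reachable a ⟨s, hsT⟩ := by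
      intro a
      by_cases h : (a : ZMod (p ^ m)) = s
      · have : a = ⟨s, hsT⟩ := Subtype.ext h
        rw [this]
      · exact SimpleGraph.Adj.reachable
          (SimpleGraph.comap_adj.mpr ((hadj s ↑a hsS h).symm))
    haveI : Nonempty ↥(Tᶜ) := ⟨⟨s, hsT⟩⟩
    exact ⟨fun a b => (reach a).trans (reach b).symm⟩
  -- complements of small sets are not subsingletons
  have hnsub : ∀ T : Set (ZMod (p ^ m)), T.ncard < p → ¬ (Tᶜ).Subsingleton := by
    intro T hT hsub
    have h1 : (Tᶜ).ncard ≤ 1 :=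
      (Set.ncard_le_one (Set.toFinite _)).mpr (fun _ ha _ hb => hsub ha hb)
    have h2 := Set.ncard_add_ncard_compl T
    rw [Nat.card_zmod] at h2
    omega
  refine ⟨hScard, hdisc, hconn, ?_⟩
  apply le_antisymm
  · exact Nat.sInf_le ⟨S, hScard, Or.inl hdisc⟩
  · refine le_csInf ⟨p, S, hScard, Or.inl hdisc⟩ ?_
    rintro k ⟨T, hTk, hbad⟩
    by_contra hlt
    push_neg at hlt
    have hT : T.ncard < p := by rw [hTk]; exact hlt
    rcases hbad with h | h
    · exact h (hconn T hT)
    · exact hnsub T hT h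
end

section
/- Let n be a natural number having at least two distinct prime divisors. Then the prime coprime graph Θ(ℤ_n) contains five pairwise adjacent vertices, i.e., it contains the complete graph K_5 as a subgraph. -/
/-- If n has at least two distinct prime divisors, then the prime coprime graph of
ℤ/nℤ contains five pairwise adjacent vertices, i.e. a K₅ subgraph. -/
theorem pcGraph_zmod_contains_K5 (n : ℕ) (hn : 2 ≤ n.primeFactors.card) :
    ∃ v : Fin 5 → ZMod n, Function.Injective v ∧
      ∀ i j : Fin 5, i ≠ j → (pcGraphAdd (ZMod n)).Adj (v i) (v j) := by
  have hn0 : n ≠ 0 := by rintro rfl; simp at hn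
  haveI : NeZero n := ⟨hn0⟩
  obtain ⟨p₀, hp₀, q₀, hq₀, hpq₀⟩ := Finset.one_lt_card.mp hn
  rw [Nat.mem_primeFactors] at hp₀ hq₀
  obtain ⟨p, q, hp, hq, hpn, hqn, hpq, hq2⟩ :
      ∃ p q, p.Prime ∧ q.Prime ∧ p ∣ n ∧ q ∣ n ∧ p ≠ q ∧ q ≠ 2 := by
    by_cases h2 : q₀ = 2
    · exact ⟨q₀, p₀, hq₀.1, hp₀.1, hq₀.2.1, hp₀.2.1, hpq₀.symm,
        fun h => hpq₀ (h.trans h2.symm)⟩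
    · exact ⟨p₀, q₀, hp₀.1, hq₀.1, hp₀.2.1, hq₀.2.1, hpq₀, h2⟩
  have ord : ∀ d, d ∣ n → addOrderOf ((↑(n / d)) : ZMod n) = d := by
    intro d hd
    rw [ZMod.addOrderOf_coe _ hn0, Nat.gcd_eq_right (Nat.div_dvd_of_dvd hd),
      Nat.div_div_self hd hn0]
  set x : ZMod n := ((n / p : ℕ) : ZMod n) with hxdef
  set y : ZMod n := ((n / q : ℕ) : ZMod n) with hydef
  set z : ZMod n := ((n / (p * q) : ℕ) : ZMod n) with hzdef
  have hx : addOrderOf x = p := ord p hpn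
  have hy : addOrderOf y = q := ord q hqn
  have hcop : Nat.Coprime p q := (Nat.coprime_primes hp hq).mpr hpq
  have hpqn : p * q ∣ n := Nat.Coprime.mul_dvd_of_dvd_of_dvd hcop hpn hqn
  have hz : addOrderOf z = p * q := ord _ hpqn
  have hny : addOrderOf (-y) = q := by rw [addOrderOf_neg, hy]
  have ne_of_ord : ∀ a b : ZMod n, addOrderOf a ≠ addOrderOf b → a ≠ b :=
    fun a b h hab => h (hab ▸ rfl)
  have h1p : (1 : ℕ) ≠ p := (hp.one_lt.ne)
  have h1q : (1 : ℕ) ≠ q := (hq.one_lt.ne)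
  have h1pq : (1 : ℕ) ≠ p * q := (Nat.one_lt_mul_iff.mpr ⟨hp.pos, hq.pos, Or.inl hp.one_lt⟩).ne
  have hppq : p ≠ p * q := ((Nat.lt_mul_iff_one_lt_right hp.pos).mpr hq.one_lt).ne
  have hqpq : q ≠ p * q := ((Nat.lt_mul_iff_one_lt_left hq.pos).mpr hp.one_lt).ne
  have h0x : (0 : ZMod n) ≠ x := ne_of_ord _ _ (by rw [addOrderOf_zero, hx]; exact h1p)
  have h0y : (0 : ZMod n) ≠ y := ne_of_ord _ _ (by rw [addOrderOf_zero, hy]; exact h1q)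
  have h0ny : (0 : ZMod n) ≠ -y := ne_of_ord _ _ (by rw [addOrderOf_zero, hny]; exact h1q)
  have h0z : (0 : ZMod n) ≠ z := ne_of_ord _ _ (by rw [addOrderOf_zero, hz]; exact h1pq)
  have hxy : x ≠ y := ne_of_ord _ _ (by rw [hx, hy]; exact hpq)
  have hxny : x ≠ -y := ne_of_ord _ _ (by rw [hx, hny]; exact hpq)
  have hxz : x ≠ z := ne_of_ord _ _ (by rw [hx, hz]; exact hppq)
  have hyz : y ≠ z := ne_of_ord _ _ (by rw [hy, hz]; exact hqpq)
  have hnyz : (-y) ≠ z := ne_of_ord _ _ (by rw [hny, hz]; exact hqpq)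
  have hyny : y ≠ -y := by
    intro h
    have h2 : (2 : ℕ) • y = 0 := by rw [two_nsmul]; exact add_eq_zero_iff_eq_neg.mpr h
    have hd : q ∣ 2 := hy ▸ addOrderOf_dvd_of_nsmul_eq_zero h2
    exact hq2 ((Nat.prime_dvd_prime_iff_eq hq Nat.prime_two).mp hd)
  have gpq : Nat.gcd p q = 1 := hcop
  have gqq : Nat.gcd q q = q := Nat.gcd_self q
  have gppq : Nat.gcd p (p * q) = p := Nat.gcd_eq_left ⟨q, rfl⟩
  have gqpq : Nat.gcd q (p * q) = q := Nat.gcd_eq_left (dvd_mul_left q p)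
  have adj : ∀ a b : ZMod n, a ≠ b →
      (Nat.gcd (addOrderOf a) (addOrderOf b) = 1 ∨ (Nat.gcd (addOrderOf a) (addOrderOf b)).Prime) →
      (pcGraphAdd (ZMod n)).Adj a b := fun a b h1 h2 => ⟨h1, h2⟩
  refine ⟨![0, x, y, -y, z], ?_, ?_⟩
  · intro i j hij
    fin_cases i <;> fin_cases j
    · rfl
    · exact absurd hij h0x
    · exact absurd hij h0y
    · exact absurd hij h0ny
    · exact absurd hij h0z
    · exact absurd hij h0x.symm
    · rfl
    · exact absurd hij hxy
    · exact absurd hij hxny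
    · exact absurd hij hxz
    · exact absurd hij h0y.symm
    · exact absurd hij hxy.symm
    · rfl
    · exact absurd hij hyny
    · exact absurd hij hyz
    · exact absurd hij h0ny.symm
    · exact absurd hij hxny.symm
    · exact absurd hij hyny.symm
    · rfl
    · exact absurd hij hnyz
    · exact absurd hij h0z.symm
    · exact absurd hij hxz.symm
    · exact absurd hij hyz.symm
    · exact absurd hij hnyz.symm
    · rfl
  · intro i j hij
    fin_cases i <;> fin_cases j
    · exact absurd rfl hij
    · refine adj (0 : ZMod n) x h0x (Or.inl ?_); rw [addOrderOf_zero, Nat.gcd_one_left]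
    · refine adj (0 : ZMod n) y h0y (Or.inl ?_); rw [addOrderOf_zero, Nat.gcd_one_left]
    · refine adj (0 : ZMod n) (-y) h0ny (Or.inl ?_); rw [addOrderOf_zero, Nat.gcd_one_left]
    · refine adj (0 : ZMod n) z h0z (Or.inl ?_); rw [addOrderOf_zero, Nat.gcd_one_left]
    · refine adj x (0 : ZMod n) h0x.symm (Or.inl ?_); rw [addOrderOf_zero, Nat.gcd_one_right]
    · exact absurd rfl hij
    · refine adj x y hxy (Or.inl ?_); rw [hx, hy]; exact gpq
    · refine adj x (-y) hxny (Or.inl ?_); rw [hx, hny]; exact gpq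
    · refine adj x z hxz (Or.inr ?_); rw [hx, hz, gppq]; exact hp
    · refine adj y (0 : ZMod n) h0y.symm (Or.inl ?_); rw [addOrderOf_zero, Nat.gcd_one_right]
    · refine adj y x hxy.symm (Or.inl ?_); rw [hy, hx, Nat.gcd_comm]; exact gpq
    · exact absurd rfl hij
    · refine adj y (-y) hyny (Or.inr ?_); rw [hy, hny, gqq]; exact hq
    · refine adj y z hyz (Or.inr ?_); rw [hy, hz, gqpq]; exact hq
    · refine adj (-y) (0 : ZMod n) h0ny.symm (Or.inl ?_); rw [addOrderOf_zero, Nat.gcd_one_right]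
    · refine adj (-y) x hxny.symm (Or.inl ?_); rw [hny, hx, Nat.gcd_comm]; exact gpq
    · refine adj (-y) y hyny.symm (Or.inr ?_); rw [hny, hy, gqq]; exact hq
    · exact absurd rfl hij
    · refine adj (-y) z hnyz (Or.inr ?_); rw [hny, hz, gqpq]; exact hq
    · refine adj z (0 : ZMod n) h0z.symm (Or.inl ?_); rw [addOrderOf_zero, Nat.gcd_one_right]
    · refine adj z x hxz.symm (Or.inr ?_); rw [hz, hx, Nat.gcd_comm, gppq]; exact hp
    · refine adj z y hyz.symm (Or.inr ?_); rw [hz, hy, Nat.gcd_comm, gqpq]; exact hq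
    · refine adj z (-y) hnyz.symm (Or.inr ?_); rw [hz, hny, Nat.gcd_comm, gqpq]; exact hq
    · exact absurd rfl hij
end

section
/- Let p and q be distinct primes. The characteristic polynomial of the signless Laplacian matrix Q of the prime coprime graph Θ(ℤ_{pq}), viewed as a real matrix, equals (X − (p+q−1))^{pq−p−q} · (X − (pq−2))^{p+q−2} · (X² − (pq + 2p + 2q − 4)·X + 2(p+q−1)(p+q−2)). In particular, the eigenvalues of Q are p+q−1 with multiplicity pq−p−q, pq−2 with multiplicity p+q−2, and the two roots of X² − (pq+2p+2q−4)X + 2(p+q−1)(p+q−2) = 0, each with multiplicity 1. -/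
open Polynomial

lemma aux_dvd {p q d : ℕ} (hp : p.Prime) (hq : q.Prime) (hpq : p ≠ q) (hd : d ∣ p * q) :
    d = 1 ∨ d = p ∨ d = q ∨ d = p * q := by
  by_cases h1 : p ∣ d <;> by_cases h2 : q ∣ d
  · exact Or.inr <| Or.inr <| Or.inr <| Nat.dvd_antisymm hd
      (((Nat.coprime_primes hp hq).mpr hpq).mul_dvd_of_dvd_of_dvd h1 h2)
  · have hco : Nat.Coprime d q := ((hq.coprime_iff_not_dvd).mpr h2).symm
    exact Or.inr <| Or.inl <| Nat.dvd_antisymm (hco.dvd_of_dvd_mul_right hd) h1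
  · have hco : Nat.Coprime d p := ((hp.coprime_iff_not_dvd).mpr h1).symm
    exact Or.inr <| Or.inr <| Or.inl <| Nat.dvd_antisymm (hco.dvd_of_dvd_mul_left hd) h2
  · have hco : Nat.Coprime d p := ((hp.coprime_iff_not_dvd).mpr h1).symm
    have hdq : d ∣ q := hco.dvd_of_dvd_mul_left hd
    have hco2 : Nat.Coprime d q := ((hq.coprime_iff_not_dvd).mpr h2).symm
    exact Or.inl (hco2.eq_one_of_dvd hdq)

lemma aux_adj {p q dx dy : ℕ} (hp : p.Prime) (hq : q.Prime) (hpq : p ≠ q)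
    (hx : dx ∣ p * q) (hy : dy ∣ p * q) (h : ¬(dx = p * q ∧ dy = p * q)) :
    Nat.gcd dx dy = 1 ∨ (Nat.gcd dx dy).Prime := by
  have hppq : Nat.gcd p (p*q) = p := Nat.gcd_eq_left (dvd_mul_right p q)
  have hqpq : Nat.gcd q (p*q) = q := Nat.gcd_eq_left (dvd_mul_left q p)
  have hcopq : Nat.gcd p q = 1 := (Nat.coprime_primes hp hq).mpr hpq
  rcases aux_dvd hp hq hpq hx with rfl|rfl|rfl|rfl <;>
    rcases aux_dvd hp hq hpq hy with rfl|rfl|rfl|rfl <;>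
    first
    | exact Or.inl (Nat.gcd_one_left _)
    | exact Or.inl (Nat.gcd_one_right _)
    | exact Or.inr (by rw [Nat.gcd_self]; assumption)
    | exact Or.inl hcopq
    | exact Or.inl (by rw [Nat.gcd_comm]; exact hcopq)
    | exact Or.inr (by rw [hppq]; exact hp)
    | exact Or.inr (by rw [Nat.gcd_comm, hppq]; exact hp)
    | exact Or.inr (by rw [hqpq]; exact hq)
    | exact Or.inr (by rw [Nat.gcd_comm, hqpq]; exact hq)
    | exact absurd ⟨rfl, rfl⟩ h

lemma aux_nat (p q : ℕ) (hp : 2 ≤ p) (hq : 2 ≤ q) : (p-1)*(q-1) = p*q - p - q + 1 := by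
  obtain ⟨p, rfl⟩ := Nat.exists_eq_add_of_le hp
  obtain ⟨q, rfl⟩ := Nat.exists_eq_add_of_le hq
  have h2 : 2+p-1 = 1+p := by omega
  have h3 : 2+q-1 = 1+q := by omega
  have h0 : (1+p)*(1+q) = p*q + p + q + 1 := by ring
  have h1 : (2+p)*(2+q) = p*q + 2*p + 2*q + 4 := by ring
  rw [h2, h3, h0, h1]
  generalize p*q = m
  omega

lemma det_diag_rank2 {ι : Type*} [Fintype ι] [DecidableEq ι] (d : ι → ℝ) (hd : ∀ i, d i ≠ 0)
    (U : Matrix ι (Fin 2) ℝ) (W : Matrix (Fin 2) ι ℝ) :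
    (Matrix.diagonal d + U * W).det
      = (∏ i, d i) * (1 + W * ((Matrix.diagonal fun i => (d i)⁻¹) * U)).det := by
  have hinv : Matrix.diagonal d * Matrix.diagonal (fun i => (d i)⁻¹) = 1 := by
    rw [Matrix.diagonal_mul_diagonal]
    convert Matrix.diagonal_one
    exact mul_inv_cancel₀ (hd _)
  have key : Matrix.diagonal d + U * W
      = Matrix.diagonal d * (1 + (Matrix.diagonal (fun i => (d i)⁻¹) * U) * W) := by
    rw [Matrix.mul_add, Matrix.mul_one, ← Matrix.mul_assoc, ← Matrix.mul_assoc, hinv,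
      Matrix.one_mul]
  rw [key, Matrix.det_mul, Matrix.det_diagonal, Matrix.det_one_add_mul_comm]

open Polynomial in
lemma eval_charpoly' {ι : Type*} [Fintype ι] [DecidableEq ι] (M : Matrix ι ι ℝ) (x : ℝ) :
    (M.charpoly).eval x = (Matrix.of fun i j => (if i = j then x else 0) - M i j).det := by
  rw [Matrix.charpoly, ← Polynomial.coe_evalRingHom, RingHom.map_det]
  congr 1
  ext i j
  by_cases h : i = j
  · subst h; simp [Matrix.charmatrix_apply_eq]
  · simp [Matrix.charmatrix_apply_ne _ _ _ h, h]

lemma sum_ind {ι : Type*} [Fintype ι] (P : ι → Prop) [DecidablePred P] (u v : ℝ) :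
    ∑ j, (if P j then u else v)
      = (Finset.univ.filter P).card * u + (Finset.univ.filter fun j => ¬ P j).card * v := by
  rw [Finset.sum_ite, Finset.sum_const, Finset.sum_const, nsmul_eq_mul, nsmul_eq_mul]

lemma prod_ind {ι : Type*} [Fintype ι] (P : ι → Prop) [DecidablePred P] (u v : ℝ) :
    ∏ j, (if P j then u else v)
      = u ^ (Finset.univ.filter P).card * v ^ (Finset.univ.filter fun j => ¬ P j).card := by
  rw [Finset.prod_ite, Finset.prod_const, Finset.prod_const]


open Polynomial

open Classical in
/-- The signless Laplacian matrix Q = D + A of a finite simple graph, as a real matrix. -/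
noncomputable def signlessLaplacian (V : Type*) [Fintype V] (G : SimpleGraph V) :
    Matrix V V ℝ :=
  Matrix.of fun i j =>
    if i = j then (G.degree i : ℝ) else if G.Adj i j then 1 else 0

/-- The characteristic polynomial of the signless Laplacian of the prime coprime graph
of ℤ/pqℤ, for distinct primes p and q. -/
theorem pcGraph_zmod_pq_signlessLaplacian_charpoly (p q : ℕ) (hp : p.Prime)
    (hq : q.Prime) (hpq : p ≠ q) :
    haveI : NeZero (p * q) := ⟨Nat.mul_ne_zero hp.pos.ne' hq.pos.ne'⟩
    (signlessLaplacian (ZMod (p * q)) (pcGraphAdd (ZMod (p * q)))).charpoly =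
      (X - C ((p : ℝ) + q - 1)) ^ (p * q - p - q) *
      (X - C ((p : ℝ) * q - 2)) ^ (p + q - 2) *
      (X ^ 2 - C ((p : ℝ) * q + 2 * p + 2 * q - 4) * X +
        C (2 * ((p : ℝ) + q - 1) * ((p : ℝ) + q - 2))) := by
  haveI : NeZero (p * q) := ⟨Nat.mul_ne_zero hp.pos.ne' hq.pos.ne'⟩
  classical
  have hp2 := hp.two_le
  have hq2 := hq.two_le
  have hpq_le : p + q ≤ p * q := by
    have h1 : 2 * q ≤ p * q := Nat.mul_le_mul_right q hp2
    have h2 : p * 2 ≤ p * q := Nat.mul_le_mul_left p hq2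
    omega
  -- cardinality of the set of elements of full order
  have hS : (Finset.univ.filter fun x : ZMod (p*q) => addOrderOf x = p*q).card
      = p*q - p - q + 1 := by
    have h := IsAddCyclic.card_addOrderOf_eq_totient (α := ZMod (p*q)) (d := p*q)
      (by rw [ZMod.card])
    rw [h, Nat.totient_mul ((Nat.coprime_primes hp hq).mpr hpq), Nat.totient_prime hp,
      Nat.totient_prime hq, aux_nat p q hp2 hq2]
  have hScompl : (Finset.univ.filter fun x : ZMod (p*q) => ¬ addOrderOf x = p*q).card
      = p + q - 1 := by
    have h := Finset.card_filter_add_card_filter_not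
      (s := (Finset.univ : Finset (ZMod (p*q)))) (fun x => addOrderOf x = p*q)
    rw [hS, Finset.card_univ, ZMod.card] at h
    omega
  have hdvd : ∀ x : ZMod (p*q), addOrderOf x ∣ p*q := by
    intro x
    have h := addOrderOf_dvd_card (x := x)
    rwa [ZMod.card] at h
  have hAdjIff : ∀ x y : ZMod (p*q), (pcGraphAdd (ZMod (p*q))).Adj x y ↔
      x ≠ y ∧ ¬(addOrderOf x = p*q ∧ addOrderOf y = p*q) := by
    intro x y
    constructor
    · rintro ⟨hne, h⟩
      refine ⟨hne, ?_⟩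
      rintro ⟨hx, hy⟩
      rw [hx, hy, Nat.gcd_self] at h
      rcases h with h | h
      · have : 2*2 ≤ p*q := Nat.mul_le_mul hp2 hq2
        omega
      · exact Nat.not_prime_mul hp.ne_one hq.ne_one h
    · rintro ⟨hne, h⟩
      exact ⟨hne, aux_adj hp hq hpq (hdvd x) (hdvd y) h⟩
  -- degrees
  have hdeg : ∀ (i : ZMod (p*q)) (inst : Fintype ((pcGraphAdd (ZMod (p*q))).neighborSet i)),
      @SimpleGraph.degree _ (pcGraphAdd (ZMod (p*q))) i inst
        = if addOrderOf i = p*q then p + q - 1 else p*q - 1 := by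
    intro i inst
    rw [SimpleGraph.degree]
    by_cases hi : addOrderOf i = p*q
    · have hnb : @SimpleGraph.neighborFinset _ (pcGraphAdd (ZMod (p*q))) i inst
          = Finset.univ.filter fun j => ¬ addOrderOf j = p*q := by
        ext j
        rw [SimpleGraph.mem_neighborFinset, hAdjIff]
        simp only [Finset.mem_filter, Finset.mem_univ, true_and]
        constructor
        · rintro ⟨hne, h⟩ hj
          exact h ⟨hi, hj⟩
        · intro hj
          exact ⟨fun he => hj (he ▸ hi), fun hc => hj hc.2⟩
      rw [hnb, hScompl, if_pos hi]
    · have hnb : @SimpleGraph.neighborFinset _ (pcGraphAdd (ZMod (p*q))) i inst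
          = Finset.univ.erase i := by
        ext j
        rw [SimpleGraph.mem_neighborFinset, hAdjIff, Finset.mem_erase]
        simp only [Finset.mem_univ, and_true]
        constructor
        · rintro ⟨hne, _⟩
          exact hne.symm
        · intro hne
          exact ⟨hne.symm, fun hc => hi hc.1⟩
      rw [hnb, Finset.card_erase_of_mem (Finset.mem_univ i), Finset.card_univ, ZMod.card,
        if_neg hi]
  -- now the polynomial identity via evaluation
  apply Polynomial.eq_of_infinite_eval_eq
  have hfin : (({(p:ℝ) + q - 1, (p:ℝ)*q - 2} : Set ℝ)ᶜ).Infinite :=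
    (Set.toFinite _).infinite_compl
  apply Set.Infinite.mono _ hfin
  intro x hx
  simp only [Set.mem_compl_iff, Set.mem_insert_iff, Set.mem_singleton_iff, not_or] at hx
  obtain ⟨hxA, hxC⟩ := hx
  have hxA' : x - ((p:ℝ) + q - 1) ≠ 0 := sub_ne_zero.mpr hxA
  have hxC' : x - ((p:ℝ)*q - 2) ≠ 0 := sub_ne_zero.mpr hxC
  simp only [Set.mem_setOf_eq]
  rw [eval_charpoly']
  -- the matrix decomposition
  have hmat : (Matrix.of fun i j => (if i = j then x else 0)
        - signlessLaplacian (ZMod (p*q)) (pcGraphAdd (ZMod (p*q))) i j)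
      = Matrix.diagonal (fun i : ZMod (p*q) =>
          x - (if addOrderOf i = p*q then (p:ℝ) + q - 1 else (p:ℝ)*q - 2))
        + (Matrix.of fun (i : ZMod (p*q)) (k : Fin 2) =>
            if k = 0 then (-1 : ℝ) else (if addOrderOf i = p*q then 1 else 0))
        * (Matrix.of fun (k : Fin 2) (j : ZMod (p*q)) =>
            if k = 0 then (1 : ℝ) else (if addOrderOf j = p*q then 1 else 0)) := by
    ext i j
    rw [Matrix.add_apply, Matrix.mul_apply, Fin.sum_univ_two]
    simp only [Matrix.of_apply, Matrix.diagonal_apply, signlessLaplacian]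
    by_cases hij : i = j
    · subst hij
      rw [if_pos rfl, if_pos rfl, if_pos rfl, hdeg i _]
      by_cases hi : addOrderOf i = p*q
      · rw [if_pos hi, if_pos hi, if_pos hi]
        have : ((p + q - 1 : ℕ) : ℝ) = (p:ℝ) + q - 1 := by
          have : 1 ≤ p + q := by omega
          push_cast [Nat.cast_sub this]
          ring
        rw [this]
        norm_num
      · rw [if_neg hi, if_neg hi, if_neg hi]
        have : ((p * q - 1 : ℕ) : ℝ) = (p:ℝ) * q - 1 := by
          have h1 : 1 ≤ p * q := by omega
          push_cast [Nat.cast_sub h1]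
          ring
        rw [this]
        norm_num
        ring
    · rw [if_neg hij, if_neg hij, if_neg hij]
      by_cases hi : addOrderOf i = p*q <;> by_cases hj : addOrderOf j = p*q
      · have hnadj : ¬ (pcGraphAdd (ZMod (p*q))).Adj i j := by
          rw [hAdjIff]
          rintro ⟨-, h⟩
          exact h ⟨hi, hj⟩
        rw [if_neg hnadj, if_pos hi, if_pos hj]
        norm_num
      all_goals {
        have hadj : (pcGraphAdd (ZMod (p*q))).Adj i j := by
          rw [hAdjIff]
          exact ⟨hij, fun hc => by simp_all⟩
        rw [if_pos hadj]
        simp [hi, hj]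
      }
  rw [hmat]
  have hdne : ∀ i : ZMod (p*q),
      x - (if addOrderOf i = p*q then (p:ℝ) + q - 1 else (p:ℝ)*q - 2) ≠ 0 := by
    intro i
    by_cases hi : addOrderOf i = p*q <;> simp [hi, hxA', hxC']
  rw [det_diag_rank2 _ hdne]
  -- the diagonal product
  have hprod : (∏ i : ZMod (p*q),
        (x - if addOrderOf i = p*q then (p:ℝ) + q - 1 else (p:ℝ)*q - 2))
      = (x - ((p:ℝ) + q - 1)) ^ (p*q - p - q + 1) * (x - ((p:ℝ)*q - 2)) ^ (p + q - 1) := by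
    rw [show (∏ i : ZMod (p*q),
        (x - if addOrderOf i = p*q then (p:ℝ) + q - 1 else (p:ℝ)*q - 2))
      = ∏ i : ZMod (p*q), (if addOrderOf i = p*q then x - ((p:ℝ) + q - 1)
          else x - ((p:ℝ)*q - 2)) from
      Finset.prod_congr rfl fun i _ => by split_ifs <;> rfl]
    rw [prod_ind, hS, hScompl]
  rw [hprod]
  have hsum : ∀ (f : ZMod (p*q) → ℝ) (u v : ℝ),
      (∀ j, addOrderOf j = p*q → f j = u) → (∀ j, ¬ addOrderOf j = p*q → f j = v) →
      ∑ j, f j = (p*q - p - q + 1 : ℕ) * u + (p + q - 1 : ℕ) * v := by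
    intro f u v h1 h2
    rw [show ∑ j, f j = ∑ j, (if addOrderOf j = p*q then u else v) from
      Finset.sum_congr rfl fun j _ => by
        split_ifs with h
        exacts [h1 j h, h2 j h]]
    rw [sum_ind, hS, hScompl]
  have hb : ((p*q - p - q + 1 : ℕ) : ℝ) = (p:ℝ)*q - p - q + 1 := by
    have h1 : q ≤ p*q - p := by omega
    have h2 : p ≤ p*q := by omega
    rw [Nat.cast_add, Nat.cast_sub h1, Nat.cast_sub h2, Nat.cast_mul, Nat.cast_one]
  have ha : ((p + q - 1 : ℕ) : ℝ) = (p:ℝ) + q - 1 := by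
    rw [Nat.cast_sub (by omega), Nat.cast_add, Nat.cast_one]
  have hDU : (Matrix.diagonal fun i : ZMod (p*q) =>
        (x - (if addOrderOf i = p*q then (p:ℝ) + q - 1 else (p:ℝ)*q - 2))⁻¹)
      * (Matrix.of fun (i : ZMod (p*q)) (k : Fin 2) =>
          if k = 0 then (-1:ℝ) else (if addOrderOf i = p*q then 1 else 0))
    = Matrix.of (fun (i : ZMod (p*q)) (k : Fin 2) =>
        (x - (if addOrderOf i = p*q then (p:ℝ) + q - 1 else (p:ℝ)*q - 2))⁻¹
          * (if k = 0 then (-1:ℝ) else (if addOrderOf i = p*q then 1 else 0))) := by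
    ext i k
    rw [Matrix.diagonal_mul]
    rfl
  rw [hDU]
  have hWDU : (Matrix.of fun (k : Fin 2) (j : ZMod (p*q)) =>
        if k = 0 then (1:ℝ) else (if addOrderOf j = p*q then 1 else 0))
      * Matrix.of (fun (i : ZMod (p*q)) (k : Fin 2) =>
          (x - (if addOrderOf i = p*q then (p:ℝ) + q - 1 else (p:ℝ)*q - 2))⁻¹
            * (if k = 0 then (-1:ℝ) else (if addOrderOf i = p*q then 1 else 0)))
      = Matrix.of ![![((p*q - p - q + 1 : ℕ) : ℝ) * (-(x - ((p:ℝ) + q - 1))⁻¹)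
            + ((p + q - 1 : ℕ) : ℝ) * (-(x - ((p:ℝ)*q - 2))⁻¹),
          ((p*q - p - q + 1 : ℕ) : ℝ) * (x - ((p:ℝ) + q - 1))⁻¹ + ((p + q - 1 : ℕ) : ℝ) * 0],
        ![((p*q - p - q + 1 : ℕ) : ℝ) * (-(x - ((p:ℝ) + q - 1))⁻¹) + ((p + q - 1 : ℕ) : ℝ) * 0,
          ((p*q - p - q + 1 : ℕ) : ℝ) * (x - ((p:ℝ) + q - 1))⁻¹ + ((p + q - 1 : ℕ) : ℝ) * 0]] := by
    ext k l
    rw [Matrix.mul_apply]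
    fin_cases k <;> fin_cases l <;>
      simp only [Matrix.of_apply, Matrix.cons_val', Matrix.cons_val_zero, Matrix.cons_val_one,
        Matrix.head_cons, Matrix.empty_val', Matrix.cons_val_fin_one, Fin.isValue,
        Fin.zero_eta, Fin.mk_one]
    · exact hsum _ _ _ (fun j hj => by simp [hj]) (fun j hj => by simp [hj])
    · exact hsum _ _ _ (fun j hj => by simp [hj]) (fun j hj => by simp [hj])
    · exact hsum _ _ _ (fun j hj => by simp [hj]) (fun j hj => by simp [hj])
    · exact hsum _ _ _ (fun j hj => by simp [hj]) (fun j hj => by simp [hj])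
  rw [hWDU]
  rw [Matrix.det_fin_two]
  simp only [Matrix.add_apply, Matrix.one_apply, Matrix.of_apply, Matrix.cons_val',
    Matrix.cons_val_zero, Matrix.cons_val_one, Matrix.head_cons, Matrix.empty_val',
    Matrix.cons_val_fin_one, Fin.isValue, if_true, if_pos rfl]
  norm_num
  have hb' : ((p*q - p - q : ℕ) : ℝ) = (p:ℝ)*q - p - q := by
    have h1 : q ≤ p*q - p := by omega
    have h2 : p ≤ p*q := by omega
    rw [Nat.cast_sub h1, Nat.cast_sub h2, Nat.cast_mul]
  rw [hb', ha]
  rw [show p + q - 1 = (p + q - 2) + 1 from by omega]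
  have hKey : ∀ D2 : ℝ, (x - ((p:ℝ) + q - 1)) * (x - ((p:ℝ)*q - 2)) * D2
      = D2 * ((x - ((p:ℝ) + q - 1)) * (x - ((p:ℝ)*q - 2))) := fun _ => by ring
  field_simp
  ring
end

section
/- Let p be a prime. The characteristic polynomial of the signless Laplacian matrix Q of the prime coprime graph Θ(ℤ_p), viewed as a real matrix, equals (X − 2(p−1)) · (X − (p−2))^{p−1}; that is, the eigenvalues of Q are 2(p−1) with multiplicity 1 and p−2 with multiplicity p−1. -/
open Polynomial

/-- Determinant of `c • 1 - J` where `J` is the all-ones matrix, for `c ≠ 0` in a field. -/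
lemma det_smul_one_sub_allOnes {F : Type*} [Field F] {n : Type*} [Fintype n] [DecidableEq n]
    [Nonempty n] (c : F) (hc : c ≠ 0) :
    (c • (1 : Matrix n n F) - Matrix.of (fun _ _ => (1 : F))).det =
      (c - Fintype.card n) * c ^ (Fintype.card n - 1) := by
  have key : c • (1 : Matrix n n F) - Matrix.of (fun _ _ => (1 : F)) =
      c • (1 + Matrix.replicateCol Unit (fun _ => -c⁻¹) * Matrix.replicateRow Unit (fun _ => (1 : F))) := by
    ext i j
    by_cases h : i = j <;>
      simp [h, Matrix.mul_apply, Matrix.one_apply, Matrix.smul_apply, mul_comm,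
        sub_eq_add_neg]
    · field_simp
    · field_simp
  rw [key, Matrix.det_smul, Matrix.det_one_add_replicateCol_mul_replicateRow]
  have hcard : 0 < Fintype.card n := Fintype.card_pos
  have hdot : dotProduct (fun _ : n => (1 : F)) (fun _ => -c⁻¹)
      = -(Fintype.card n * c⁻¹) := by
    simp [dotProduct, Finset.sum_const, nsmul_eq_mul]
  rw [hdot]
  obtain ⟨m, hm⟩ : ∃ m, Fintype.card n = m + 1 := ⟨Fintype.card n - 1, (Nat.succ_pred_eq_of_pos hcard).symm⟩
  rw [hm]
  simp only [Nat.add_sub_cancel]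
  field_simp
  ring

/-- The prime coprime graph of `ZMod p` for `p` prime is the complete graph. -/
lemma pcGraphAdd_zmod_eq_top (p : ℕ) (hp : p.Prime) :
    haveI : NeZero p := ⟨hp.pos.ne'⟩
    pcGraphAdd (ZMod p) = ⊤ := by
  haveI : NeZero p := ⟨hp.pos.ne'⟩
  ext x y
  simp only [pcGraphAdd, SimpleGraph.top_adj]
  refine ⟨fun h => h.1, fun h => ⟨h, ?_⟩⟩
  have hx : addOrderOf x ∣ p := by
    simpa [ZMod.card] using addOrderOf_dvd_card (x := x)
  have hy : addOrderOf y ∣ p := by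
    simpa [ZMod.card] using addOrderOf_dvd_card (x := y)
  rcases (Nat.Prime.eq_one_or_self_of_dvd hp _ hx) with h1 | h1 <;>
    rcases (Nat.Prime.eq_one_or_self_of_dvd hp _ hy) with h2 | h2 <;>
      simp [h1, h2, Nat.gcd_self, hp]

/-- The characteristic polynomial of the signless Laplacian of the prime coprime graph
of ℤ/pℤ, for a prime p. -/
theorem pcGraph_zmod_p_signlessLaplacian_charpoly (p : ℕ) (hp : p.Prime) :
    haveI : NeZero p := ⟨hp.pos.ne'⟩
    (signlessLaplacian (ZMod p) (pcGraphAdd (ZMod p))).charpoly =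
      (X - C (2 * ((p : ℝ) - 1))) * (X - C ((p : ℝ) - 2)) ^ (p - 1) := by
  haveI : NeZero p := ⟨hp.pos.ne'⟩
  haveI : Nonempty (ZMod p) := ⟨0⟩
  classical
  set Q := signlessLaplacian (ZMod p) (pcGraphAdd (ZMod p)) with hQ
  -- the graph is complete, so Q has diagonal p-1 and off-diagonal 1
  have hcard : Fintype.card (ZMod p) = p := ZMod.card p
  have hdeg : ∀ i : ZMod p, (pcGraphAdd (ZMod p)).degree i = p - 1 := by
    intro i
    rw [pcGraphAdd_zmod_eq_top p hp]
    have h := SimpleGraph.complete_graph_degree (V := ZMod p) i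
    rw [hcard] at h
    convert h using 2
  have hadj : ∀ i j : ZMod p, i ≠ j → (pcGraphAdd (ZMod p)).Adj i j := by
    intro i j hij
    rw [pcGraphAdd_zmod_eq_top p hp]
    exact hij
  have hQdef : ∀ i j, Q i j = if i = j then ((p : ℝ) - 1) else 1 := by
    intro i j
    rw [hQ]
    simp only [signlessLaplacian, Matrix.of_apply]
    classical
    by_cases h : i = j
    · subst h
      rw [if_pos rfl, if_pos rfl, hdeg]
      have : (1 : ℕ) ≤ p := hp.one_lt.le
      push_cast [Nat.cast_sub this]
      ring
    · rw [if_neg h, if_neg h, if_pos (hadj i j h)]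
  apply Polynomial.eq_of_infinite_eval_eq
  apply Set.Infinite.mono (s := {(p : ℝ) - 2}ᶜ)
  · intro t ht
    simp only [Set.mem_compl_iff, Set.mem_singleton_iff] at ht
    simp only [Set.mem_setOf_eq]
    -- evaluate the charpoly as a determinant
    have heval : (Q.charpoly).eval t = ((Q.charmatrix).map (Polynomial.eval t)).det := by
      rw [Matrix.charpoly, ← Polynomial.coe_evalRingHom, RingHom.map_det,
        RingHom.mapMatrix_apply]
    rw [heval]
    have hmap : (Q.charmatrix).map (Polynomial.eval t) =
        (t - ((p : ℝ) - 2)) • (1 : Matrix (ZMod p) (ZMod p) ℝ) -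
          Matrix.of (fun _ _ => (1 : ℝ)) := by
      ext i j
      classical
      by_cases h : i = j
      · subst h
        rw [Matrix.map_apply, Matrix.charmatrix_apply_eq]
        simp [hQdef, Matrix.one_apply]
        ring
      · rw [Matrix.map_apply, Matrix.charmatrix_apply_ne _ _ _ h]
        simp [hQdef, h, Matrix.one_apply_ne h]
    rw [hmap, det_smul_one_sub_allOnes _ (sub_ne_zero.mpr ht), hcard]
    simp only [eval_mul, eval_pow, eval_sub, eval_X, eval_C]
    ring_nf
  · exact Set.Finite.infinite_compl (Set.finite_singleton _)
end

section
/- Let p be a prime and let m ≥ 2 be a natural number. The characteristic polynomial of the signless Laplacian matrix Q of the prime coprime graph Θ(ℤ_{p^m}), viewed as a real matrix, equals (X − p)^{p^m − p − 1} · (X − (p^m − 2))^{p−1} · (X² − (p^m + 2p − 2)·X + 2p(p−1)). In particular, the eigenvalues of Q are p with multiplicity p^m − p − 1, p^m − 2 with multiplicity p − 1, and the two roots of X² − (p^m + 2p − 2)X + 2p(p−1) = 0, each with multiplicity 1. -/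
open Polynomial
open Matrix

lemma eval_charpoly_eq {ι : Type} [Fintype ι] [DecidableEq ι] (M : Matrix ι ι ℝ) (x : ℝ) :
    M.charpoly.eval x = (Matrix.of fun i j => (if i = j then x else 0) - M i j).det := by
  rw [Matrix.charpoly, ← Polynomial.coe_evalRingHom, RingHom.map_det]
  congr 1
  ext i j
  by_cases h : i = j
  · subst h; simp [Matrix.charmatrix_apply_eq]
  · simp [Matrix.charmatrix_apply_ne _ _ _ h, h]

lemma det_smul_one_sub_const {α : Type} [Fintype α] [DecidableEq α] (c e : ℝ) (hc : c ≠ 0) :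
    (c • (1 : Matrix α α ℝ) - Matrix.of (fun _ _ => e)).det
      = c ^ Fintype.card α * (1 - Fintype.card α * e / c) := by
  have h : c • (1 : Matrix α α ℝ) - Matrix.of (fun _ _ => e)
      = c • ((1 : Matrix α α ℝ) + replicateCol Unit (fun _ => (1:ℝ)) * replicateRow Unit (fun _ => -(e/c))) := by
    ext i j
    by_cases hij : i = j
    · simp [hij, Matrix.one_apply, Matrix.mul_apply]
      field_simp
      ring
    · simp [hij, Matrix.one_apply, Matrix.mul_apply]
      field_simp
  rw [h, Matrix.det_smul, Matrix.det_one_add_replicateCol_mul_replicateRow]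
  have : (fun _ => -(e/c) : α → ℝ) ⬝ᵥ (fun _ => 1) = -(Fintype.card α * e / c) := by
    simp [dotProduct, Finset.sum_const]; ring
  rw [this]
  ring

lemma aux_charpoly {α β : Type} [Fintype α] [DecidableEq α] [Fintype β] [DecidableEq β]
    (a b : ℕ) (ha : 1 ≤ a) (hb : 1 ≤ b) (hα : Fintype.card α = a) (hβ : Fintype.card β = b) :
    (Matrix.fromBlocks
      (Matrix.of fun i j : α => if i = j then ((a : ℝ) + b - 1) else 1)
      (Matrix.of fun (_ : α) (_ : β) => (1:ℝ))
      (Matrix.of fun (_ : β) (_ : α) => (1:ℝ))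
      (Matrix.of fun i j : β => if i = j then (a:ℝ) else 0)).charpoly =
    (X - C (a:ℝ)) ^ (b - 1) * (X - C ((a:ℝ) + b - 2)) ^ (a - 1) *
      (X^2 - C (3*(a:ℝ) + b - 2) * X + C (2*a*((a:ℝ)-1))) := by
  apply Polynomial.eq_of_infinite_eval_eq
  apply Set.Infinite.mono (s := ({(a:ℝ), (a:ℝ)+b-2} : Set ℝ)ᶜ)
  swap
  · exact Set.Finite.infinite_compl (Set.toFinite _)
  intro x hx
  simp only [Set.mem_compl_iff, Set.mem_insert_iff, Set.mem_singleton_iff, not_or] at hx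
  obtain ⟨hx1, hx2⟩ := hx
  have h1 : x - (a:ℝ) ≠ 0 := sub_ne_zero.mpr hx1
  have h2 : x - ((a:ℝ) + b - 2) ≠ 0 := sub_ne_zero.mpr hx2
  simp only [Set.mem_setOf_eq]
  rw [eval_charpoly_eq]
  -- identify the matrix with a fromBlocks
  have hM : (Matrix.of fun i j : α ⊕ β =>
      (if i = j then x else 0) - (Matrix.fromBlocks
      (Matrix.of fun i j : α => if i = j then ((a : ℝ) + b - 1) else 1)
      (Matrix.of fun (_ : α) (_ : β) => (1:ℝ))
      (Matrix.of fun (_ : β) (_ : α) => (1:ℝ))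
      (Matrix.of fun i j : β => if i = j then (a:ℝ) else 0)) i j)
      = Matrix.fromBlocks
        ((x - ((a:ℝ)+b-2)) • (1 : Matrix α α ℝ) - Matrix.of (fun _ _ => (1:ℝ)))
        (Matrix.of fun (_ : α) (_ : β) => (-1:ℝ))
        (Matrix.of fun (_ : β) (_ : α) => (-1:ℝ))
        ((x - (a:ℝ)) • (1 : Matrix β β ℝ)) := by
    ext i j
    rcases i with i | i <;> rcases j with j | j
    · by_cases hij : i = j <;> simp [hij, Matrix.one_apply] <;> ring
    · simp
    · simp
    · by_cases hij : i = j <;> simp [hij, Matrix.one_apply] <;> ring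
  rw [hM]
  haveI : Invertible ((x - (a:ℝ)) • (1 : Matrix β β ℝ)) :=
    ⟨(x - (a:ℝ))⁻¹ • (1 : Matrix β β ℝ),
      by rw [Matrix.smul_mul, Matrix.mul_smul, smul_smul, one_mul, inv_mul_cancel₀ h1, one_smul],
      by rw [Matrix.smul_mul, Matrix.mul_smul, smul_smul, one_mul, mul_inv_cancel₀ h1, one_smul]⟩
  rw [Matrix.det_fromBlocks₂₂]
  have hinv : ⅟((x - (a:ℝ)) • (1 : Matrix β β ℝ)) = (x - (a:ℝ))⁻¹ • (1 : Matrix β β ℝ) :=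
    invOf_eq_right_inv (by
      rw [Matrix.smul_mul, Matrix.mul_smul, smul_smul, one_mul, mul_inv_cancel₀ h1, one_smul])
  rw [hinv]
  have hschur : ((x - ((a:ℝ)+b-2)) • (1 : Matrix α α ℝ) - Matrix.of (fun _ _ => (1:ℝ)))
      - (Matrix.of fun (_ : α) (_ : β) => (-1:ℝ)) * ((x - (a:ℝ))⁻¹ • (1 : Matrix β β ℝ))
        * (Matrix.of fun (_ : β) (_ : α) => (-1:ℝ))
      = (x - ((a:ℝ)+b-2)) • (1 : Matrix α α ℝ)
        - Matrix.of (fun _ _ => (1 + b * (x - (a:ℝ))⁻¹ : ℝ)) := by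
    ext i j
    simp [Matrix.mul_apply, Matrix.one_apply, Finset.sum_const, hβ]
    ring
  rw [hschur, det_smul_one_sub_const _ _ h2,
    Matrix.det_smul, Matrix.det_one, hα, hβ, mul_one]
  -- RHS eval
  simp only [eval_mul, eval_pow, eval_sub, eval_add, eval_X, eval_C]
  -- algebra
  have powsplit : ∀ (y : ℝ) (k : ℕ), 1 ≤ k → y ^ k = y ^ (k-1) * y := by
    intro y k hk
    conv_lhs => rw [← Nat.sub_add_cancel hk]
    rw [pow_succ]
  have hbsplit := powsplit (x - (a:ℝ)) b hb
  have hasplit := powsplit (x - ((a:ℝ)+b-2)) a ha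
  rw [hbsplit, hasplit]
  have key : (x - (a:ℝ)) * ((x - ((a:ℝ)+b-2)) *
      (1 - (a:ℝ) * (1 + b * (x - (a:ℝ))⁻¹) / (x - ((a:ℝ)+b-2))))
      = x^2 - (3*(a:ℝ) + b - 2) * x + 2*a*((a:ℝ)-1) := by
    field_simp
    ring
  calc (x - (a:ℝ)) ^ (b-1) * (x - (a:ℝ)) * ((x - ((a:ℝ)+b-2)) ^ (a-1) * (x - ((a:ℝ)+b-2)) *
        (1 - (a:ℝ) * (1 + b * (x - (a:ℝ))⁻¹) / (x - ((a:ℝ)+b-2))))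
      = (x - (a:ℝ)) ^ (b-1) * (x - ((a:ℝ)+b-2)) ^ (a-1) *
        ((x - (a:ℝ)) * ((x - ((a:ℝ)+b-2)) *
          (1 - (a:ℝ) * (1 + b * (x - (a:ℝ))⁻¹) / (x - ((a:ℝ)+b-2))))) := by ring
    _ = _ := by rw [key]



/-- The characteristic polynomial of the signless Laplacian of the prime coprime graph
of ℤ/p^mℤ, for a prime p and m ≥ 2. -/
theorem pcGraph_zmod_prime_pow_signlessLaplacian_charpoly (p m : ℕ) (hp : p.Prime)
    (hm : 2 ≤ m) :
    haveI : NeZero (p ^ m) := ⟨pow_ne_zero m hp.pos.ne'⟩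
    (signlessLaplacian (ZMod (p ^ m)) (pcGraphAdd (ZMod (p ^ m)))).charpoly =
      (X - C (p : ℝ)) ^ (p ^ m - p - 1) *
      (X - C ((p : ℝ) ^ m - 2)) ^ (p - 1) *
      (X ^ 2 - C ((p : ℝ) ^ m + 2 * p - 2) * X + C (2 * p * ((p : ℝ) - 1))) := by
  haveI : NeZero (p ^ m) := ⟨pow_ne_zero m hp.pos.ne'⟩
  classical
  have hp1 : 1 < p := hp.one_lt
  have hnp : p < p ^ m := by
    calc p = p ^ 1 := (pow_one p).symm
    _ < p ^ m := Nat.pow_lt_pow_right hp1 (by omega)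
  have hple : p ≤ p ^ m := hnp.le
  set G := pcGraphAdd (ZMod (p ^ m)) with hG
  set Pr : ZMod (p ^ m) → Prop := fun x => addOrderOf x ∣ p with hPr
  -- orders divide p^m
  have horder : ∀ x : ZMod (p ^ m), addOrderOf x ∣ p ^ m := by
    intro x
    have := addOrderOf_dvd_card (x := x)
    rwa [ZMod.card] at this
  -- adjacency characterization
  have hadj : ∀ x y : ZMod (p ^ m), G.Adj x y ↔ x ≠ y ∧ (Pr x ∨ Pr y) := by
    intro x y
    simp only [hG, pcGraphAdd]
    constructor
    · rintro ⟨hne, h⟩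
      refine ⟨hne, ?_⟩
      by_contra hc
      push_neg at hc
      obtain ⟨hcx, hcy⟩ := hc
      have hdvd2 : ∀ z : ZMod (p ^ m), ¬ addOrderOf z ∣ p → p ^ 2 ∣ addOrderOf z := by
        intro z hz
        obtain ⟨k, hk, hzk⟩ := (Nat.dvd_prime_pow hp).mp (horder z)
        rw [hzk] at hz ⊢
        have h2k : 2 ≤ k := by
          by_contra hkk
          push_neg at hkk
          interval_cases k
          · exact hz (by simpa using one_dvd p)
          · exact hz (by simpa using dvd_refl p)
        exact pow_dvd_pow p h2k
      have hg : p ^ 2 ∣ Nat.gcd (addOrderOf x) (addOrderOf y) :=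
        Nat.dvd_gcd (hdvd2 x hcx) (hdvd2 y hcy)
      rcases h with h | h
      · rw [h] at hg
        have := Nat.le_of_dvd one_pos hg
        nlinarith
      · have hpg : p ∣ Nat.gcd (addOrderOf x) (addOrderOf y) :=
          dvd_trans (dvd_pow_self p two_ne_zero) hg
        have heq : p = Nat.gcd (addOrderOf x) (addOrderOf y) :=
          (Nat.prime_dvd_prime_iff_eq hp h).mp hpg
        rw [← heq] at hg
        have := Nat.le_of_dvd hp.pos hg
        nlinarith
    · rintro ⟨hne, h⟩
      refine ⟨hne, ?_⟩
      have key : ∀ u v : ℕ, u ∣ p → (Nat.gcd u v = 1 ∨ (Nat.gcd u v).Prime) := by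
        intro u v hu
        have hgp : Nat.gcd u v ∣ p := dvd_trans (Nat.gcd_dvd_left _ _) hu
        rcases hp.eq_one_or_self_of_dvd _ hgp with h1 | h1
        · exact Or.inl h1
        · right; rw [h1]; exact hp
      rcases h with h | h
      · exact key _ _ h
      · rw [Nat.gcd_comm]; exact key _ _ h
  -- membership criterion
  have hPr_iff : ∀ x : ZMod (p ^ m), Pr x ↔ p ^ (m - 1) ∣ x.val := by
    intro x
    have hx : ((p * x.val : ℕ) : ZMod (p ^ m)) = (p : ℕ) • x := by
      rw [Nat.cast_mul, ZMod.natCast_zmod_val, nsmul_eq_mul]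
    have hfact : p ^ m = p * p ^ (m - 1) := by
      rw [← pow_succ']
      congr 1
      omega
    rw [hPr]
    simp only
    rw [addOrderOf_dvd_iff_nsmul_eq_zero, ← hx, ZMod.natCast_eq_zero_iff]
    have hiff : ∀ v : ℕ, (p ^ m ∣ p * v ↔ p ^ (m - 1) ∣ v) := by
      intro v
      rw [hfact, Nat.mul_dvd_mul_iff_left hp.pos]
    exact hiff x.val
  -- cardinality of the clique part
  have hdpos : 0 < p ^ (m - 1) := pow_pos hp.pos _
  have hfact' : p ^ (m - 1) * p = p ^ m := by
    rw [← pow_succ]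
    congr 1
    omega
  have hcardA : (Finset.univ.filter Pr).card = p := by
    have hset : Finset.univ.filter Pr
        = Finset.univ.filter (fun x : ZMod (p ^ m) => p ^ (m - 1) ∣ x.val) := by
      ext x
      simp [hPr_iff x]
    rw [hset]
    have hb : (Finset.univ.filter (fun x : ZMod (p ^ m) => p ^ (m - 1) ∣ x.val)).card
        = (Finset.range p).card := by
      apply Finset.card_bij' (fun x _ => x.val / p ^ (m - 1))
        (fun k _ => ((k * p ^ (m - 1) : ℕ) : ZMod (p ^ m)))
      · intro x hx
        rw [Finset.mem_range]
        rw [Nat.div_lt_iff_lt_mul hdpos]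
        calc x.val < p ^ m := ZMod.val_lt x
        _ = p * p ^ (m-1) := by rw [mul_comm, hfact']
      · intro k hk
        simp only [Finset.mem_filter, Finset.mem_univ, true_and]
        rw [ZMod.val_natCast]
        exact (Nat.dvd_mod_iff ⟨p, hfact'.symm⟩).mpr ⟨k, mul_comm _ _⟩
      · intro x hx
        simp only [Finset.mem_filter, Finset.mem_univ, true_and] at hx
        rw [Nat.div_mul_cancel hx, ZMod.natCast_zmod_val]
      · intro k hk
        rw [Finset.mem_range] at hk
        rw [ZMod.val_natCast, Nat.mod_eq_of_lt (by
          calc k * p ^ (m-1) < p * p ^ (m-1) := by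
                exact (Nat.mul_lt_mul_right hdpos).mpr hk
          _ = p ^ m := by rw [mul_comm, hfact'])]
        exact Nat.mul_div_cancel k hdpos
    rw [hb, Finset.card_range]
  have hcardB : (Finset.univ.filter (fun x => ¬ Pr x)).card = p ^ m - p := by
    have := Finset.card_filter_add_card_filter_not (s := Finset.univ) Pr
    rw [hcardA, Finset.card_univ, ZMod.card] at this
    omega
  -- degrees
  have hdegA : ∀ v : ZMod (p ^ m), Pr v → G.degree v = p ^ m - 1 := by
    intro v hv
    have hnb : G.neighborFinset v = Finset.univ.erase v := by
      ext x
      rw [SimpleGraph.mem_neighborFinset, hadj, Finset.mem_erase]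
      constructor
      · rintro ⟨h1, _⟩; exact ⟨Ne.symm h1, Finset.mem_univ x⟩
      · rintro ⟨h1, _⟩; exact ⟨Ne.symm h1, Or.inl hv⟩
    rw [SimpleGraph.degree, hnb, Finset.card_erase_of_mem (Finset.mem_univ v),
      Finset.card_univ, ZMod.card]
  have hdegB : ∀ v : ZMod (p ^ m), ¬ Pr v → G.degree v = p := by
    intro v hv
    have hnb : G.neighborFinset v = Finset.univ.filter Pr := by
      ext x
      rw [SimpleGraph.mem_neighborFinset, hadj, Finset.mem_filter]
      constructor
      · rintro ⟨h1, h2 | h2⟩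
        · exact absurd h2 hv
        · exact ⟨Finset.mem_univ x, h2⟩
      · rintro ⟨_, h2⟩
        exact ⟨fun he => hv (he ▸ h2), Or.inr h2⟩
    rw [SimpleGraph.degree, hnb, hcardA]
  -- reindex
  set e : {x // Pr x} ⊕ {x // ¬ Pr x} ≃ ZMod (p ^ m) := Equiv.sumCompl Pr with he
  have hQ : (signlessLaplacian (ZMod (p ^ m)) G).submatrix ⇑e ⇑e
      = Matrix.fromBlocks
        (Matrix.of fun i j : {x // Pr x} => if i = j then ((p : ℝ) + (p ^ m - p : ℕ) - 1) else 1)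
        (Matrix.of fun (_ : {x // Pr x}) (_ : {x // ¬ Pr x}) => (1:ℝ))
        (Matrix.of fun (_ : {x // ¬ Pr x}) (_ : {x // Pr x}) => (1:ℝ))
        (Matrix.of fun i j : {x // ¬ Pr x} => if i = j then (p:ℝ) else 0) := by
    ext i j
    rcases i with i | i <;> rcases j with j | j
    · by_cases hij : i = j
      · subst hij
        simp only [Matrix.submatrix_apply, he, Equiv.sumCompl_apply_inl,
          signlessLaplacian, Matrix.of_apply, if_pos rfl, Matrix.fromBlocks_apply₁₁]
        rw [hdegA _ i.2]
        rw [Nat.cast_sub (by omega : 1 ≤ p ^ m), Nat.cast_sub hple]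
        push_cast
        ring
      · have hne : (i : ZMod (p ^ m)) ≠ (j : ZMod (p ^ m)) :=
          fun h => hij (Subtype.ext h)
        simp only [Matrix.submatrix_apply, he, Equiv.sumCompl_apply_inl,
          signlessLaplacian, Matrix.of_apply, Matrix.fromBlocks_apply₁₁, if_neg hne, if_neg hij]
        rw [if_pos ((hadj _ _).mpr ⟨hne, Or.inl i.2⟩)]
    · have hne : (i : ZMod (p ^ m)) ≠ (j : ZMod (p ^ m)) :=
        fun h => j.2 (h ▸ i.2)
      simp only [Matrix.submatrix_apply, he, Equiv.sumCompl_apply_inl,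
        Equiv.sumCompl_apply_inr, signlessLaplacian, Matrix.of_apply,
        Matrix.fromBlocks_apply₁₂, if_neg hne]
      rw [if_pos ((hadj _ _).mpr ⟨hne, Or.inl i.2⟩)]
    · have hne : (i : ZMod (p ^ m)) ≠ (j : ZMod (p ^ m)) :=
        fun h => i.2 (h ▸ j.2)
      simp only [Matrix.submatrix_apply, he, Equiv.sumCompl_apply_inl,
        Equiv.sumCompl_apply_inr, signlessLaplacian, Matrix.of_apply,
        Matrix.fromBlocks_apply₂₁, if_neg hne]
      rw [if_pos ((hadj _ _).mpr ⟨hne, Or.inr j.2⟩)]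
    · by_cases hij : i = j
      · subst hij
        simp only [Matrix.submatrix_apply, he, Equiv.sumCompl_apply_inr,
          signlessLaplacian, Matrix.of_apply, if_pos rfl, if_true, Matrix.fromBlocks_apply₂₂]
        rw [hdegB _ i.2]
      · have hne : (i : ZMod (p ^ m)) ≠ (j : ZMod (p ^ m)) :=
          fun h => hij (Subtype.ext h)
        simp only [Matrix.submatrix_apply, he, Equiv.sumCompl_apply_inr,
          signlessLaplacian, Matrix.of_apply, Matrix.fromBlocks_apply₂₂, if_neg hne, if_neg hij]
        rw [if_neg]
        rw [hadj]
        rintro ⟨-, h | h⟩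
        · exact i.2 h
        · exact j.2 h
  have hcards1 : Fintype.card {x // Pr x} = p := by
    rw [Fintype.card_subtype]
    exact hcardA
  have hcards2 : Fintype.card {x // ¬ Pr x} = p ^ m - p := by
    rw [Fintype.card_subtype]
    exact hcardB
  calc (signlessLaplacian (ZMod (p ^ m)) G).charpoly
      = ((Matrix.reindex e.symm e.symm) (signlessLaplacian (ZMod (p ^ m)) G)).charpoly :=
        (Matrix.charpoly_reindex _ _).symm
    _ = ((signlessLaplacian (ZMod (p ^ m)) G).submatrix ⇑e ⇑e).charpoly := by
        congr 1
    _ = _ := by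
        rw [hQ, aux_charpoly p (p ^ m - p) hp.one_lt.le (by omega) hcards1 hcards2]
        have e1 : ((p:ℝ) + (p ^ m - p : ℕ) - 2 : ℝ) = (p:ℝ) ^ m - 2 := by
          rw [Nat.cast_sub hple]
          push_cast
          ring
        have e2 : (3 * (p:ℝ) + (p ^ m - p : ℕ) - 2 : ℝ) = (p:ℝ) ^ m + 2 * p - 2 := by
          rw [Nat.cast_sub hple]
          push_cast
          ring
        rw [e1, e2]
end

section
/- Let p be a prime, let m ≥ 2 be a natural number, and set n = p^m. The characteristic polynomial of the signless Laplacian matrix Q of the prime coprime graph Θ(D_n) of the dihedral group D_n of order 2n, viewed as a real matrix, equals (X − (2n−2))^{n+p−1} · (X − (n+p))^{n−p−1} · (X² − 2(2n+p−1)·X + ((2n+p−1)² − (2n² − 2n − p² + 1))). In particular, the eigenvalues of Q are 2n−2 with multiplicity n+p−1, n+p with multiplicity n−p−1, and 2n+p−1 ± √(2n² − 2n − p² + 1), each with multiplicity 1. -/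
open Polynomial

section Aux
open Polynomial Matrix Finset

set_option linter.unusedSectionVars false


set_option maxHeartbeats 1000000 in
lemma splitQ_charpoly {V : Type*} [Fintype V] [DecidableEq V] (P : V → Prop) [DecidablePred P]
    (a b : ℕ) (ha : (Finset.univ.filter P).card = a)
    (hb : (Finset.univ.filter (fun v => ¬ P v)).card = b)
    (ha1 : 1 ≤ a) (hb1 : 1 ≤ b)
    (M : Matrix V V ℝ)
    (hM : ∀ i j, M i j = if i = j then (if P i then ((a:ℝ)+b-1) else (a:ℝ))
      else if P i ∨ P j then 1 else 0) :
    M.charpoly = (X - C ((a:ℝ)+(b:ℝ)-2))^(a-1) * (X - C (a:ℝ))^(b-1) *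
      (X^2 - C (((a:ℝ)+b-2) + (a:ℝ) + (a:ℝ)) * X
        + C (((a:ℝ)+b-2)*(a:ℝ) + (a:ℝ)*(a:ℝ) - (a:ℝ)*(b:ℝ))) := by
  classical
  set F := RatFunc ℝ
  have hinj : Function.Injective (algebraMap ℝ[X] F) := IsFractionRing.injective _ _
  apply hinj
  set φ : ℝ[X] →+* F := (algebraMap ℝ[X] F : ℝ[X] →+* F) with hφ
  set x : F := φ X with hx
  set α : F := x - ((a:F)+(b:F)-2) with hα
  set β : F := x - (a:F) with hβ
  have hCab : φ (C ((a:ℝ)+(b:ℝ)-2)) = (a:F)+(b:F)-2 := by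
    simp only [map_sub, map_add, map_natCast, map_ofNat]
  have hCa : φ (C ((a:ℝ))) = (a:F) := by simp only [map_natCast]
  have hCb : φ (C ((b:ℝ))) = (b:F) := by simp only [map_natCast]
  have hαne : α ≠ 0 := by
    rw [hα, hx, ← hCab, sub_ne_zero]
    exact fun h => Polynomial.X_ne_C _ (hinj h)
  have hβne : β ≠ 0 := by
    rw [hβ, hx, ← hCa, sub_ne_zero]
    exact fun h => Polynomial.X_ne_C _ (hinj h)
  -- the matrices
  set Δ : Matrix V V F := Matrix.diagonal (fun v => if P v then α else β) with hΔ
  set Δ' : Matrix V V F := Matrix.diagonal (fun v => if P v then α⁻¹ else β⁻¹) with hΔ'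
  set U : Matrix V (Fin 2) F :=
    Matrix.of (fun v j => if j = 0 then (if P v then (1:F) else 0)
      else (if P v then 0 else 1)) with hU
  set W : Matrix (Fin 2) V F :=
    Matrix.of (fun j v => if j = 0 then (-1:F) else (if P v then -1 else 0)) with hW
  have hΔΔ' : Δ * Δ' = 1 := by
    rw [hΔ, hΔ', diagonal_mul_diagonal]
    ext i j
    rcases eq_or_ne i j with rfl | h
    · by_cases h : P i <;>
        simp [h, mul_inv_cancel₀ hαne, mul_inv_cancel₀ hβne, Matrix.one_apply_eq]
    · simp [Matrix.diagonal_apply_ne _ h, Matrix.one_apply_ne h]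
  have hN : (charmatrix M).map φ = Δ + U * W := by
    ext i j
    rcases eq_or_ne i j with h | h
    · subst h
      rw [Matrix.map_apply, charmatrix_apply_eq, hM i i, map_sub]
      by_cases hPi : P i
      · have hc : φ (C ((a:ℝ)+(b:ℝ)-1)) = (a:F)+(b:F)-1 := by
          simp only [map_sub, map_add, map_natCast, Polynomial.C_1, _root_.map_one]
        simp only [hPi, if_true, Matrix.add_apply, hΔ, diagonal_apply_eq,
          Matrix.mul_apply, Fin.sum_univ_two, hU, hW, Matrix.of_apply, hc]
        simp only [if_true, if_pos hPi, hα, hx]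
        norm_num
        ring
      · simp only [hPi, if_false, Matrix.add_apply, hΔ, diagonal_apply_eq,
          Matrix.mul_apply, Fin.sum_univ_two, hU, hW, Matrix.of_apply, hCa]
        simp only [if_neg hPi, hβ, hx]
        norm_num
    · rw [Matrix.map_apply, charmatrix_apply_ne _ _ _ h, hM i j, if_neg h]
      simp only [Matrix.add_apply, hΔ, Matrix.diagonal_apply_ne _ h,
        Matrix.mul_apply, Fin.sum_univ_two, hU, hW, Matrix.of_apply]
      by_cases hPi : P i <;> by_cases hPj : P j <;>
        simp [hPi, hPj, map_neg, _root_.map_one]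
  have key : (charmatrix M).map φ = Δ * (1 + Δ' * (U * W)) := by
    rw [Matrix.mul_add, mul_one, ← Matrix.mul_assoc, hΔΔ', one_mul, hN]
  have hdetΔ : Δ.det = α ^ a * β ^ b := by
    rw [hΔ, det_diagonal, Finset.prod_ite]
    simp [Finset.prod_const, ha, hb]
  have sumP : ∀ c : F, (∑ v : V, if P v then c else 0) = a * c := by
    intro c
    rw [Finset.sum_ite, Finset.sum_const, Finset.sum_const_zero, add_zero, ha, nsmul_eq_mul]
  have sumNP : ∀ c : F, (∑ v : V, if P v then 0 else c) = b * c := by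
    intro c
    rw [Finset.sum_ite, Finset.sum_const_zero, zero_add, Finset.sum_const, hb, nsmul_eq_mul]
  have hDU : ∀ (v : V) (j : Fin 2), (Δ' * U) v j = (if P v then α⁻¹ else β⁻¹) * U v j := by
    intro v j; rw [hΔ', Matrix.diagonal_mul]
  have e00 : (W * (Δ' * U)) 0 0 = -((a:F) * α⁻¹) := by
    rw [Matrix.mul_apply]
    have h1 : ∀ v : V, W 0 v * (Δ' * U) v 0 = (if P v then -α⁻¹ else 0) := by
      intro v; rw [hDU]; by_cases h : P v <;> simp [hW, hU, h, neg_one_mul]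
    rw [Finset.sum_congr rfl fun v _ => h1 v, sumP]; ring
  have e01 : (W * (Δ' * U)) 0 1 = -((b:F) * β⁻¹) := by
    rw [Matrix.mul_apply]
    have h1 : ∀ v : V, W 0 v * (Δ' * U) v 1 = (if P v then 0 else -β⁻¹) := by
      intro v; rw [hDU]; by_cases h : P v <;> simp [hW, hU, h, neg_one_mul]
    rw [Finset.sum_congr rfl fun v _ => h1 v, sumNP]; ring
  have e10 : (W * (Δ' * U)) 1 0 = -((a:F) * α⁻¹) := by
    rw [Matrix.mul_apply]
    have h1 : ∀ v : V, W 1 v * (Δ' * U) v 0 = (if P v then -α⁻¹ else 0) := by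
      intro v; rw [hDU]; by_cases h : P v <;> simp [hW, hU, h, neg_one_mul]
    rw [Finset.sum_congr rfl fun v _ => h1 v, sumP]; ring
  have e11 : (W * (Δ' * U)) 1 1 = 0 := by
    rw [Matrix.mul_apply]
    have h1 : ∀ v : V, W 1 v * (Δ' * U) v 1 = (0:F) := by
      intro v; rw [hDU]; by_cases h : P v <;> simp [hW, hU, h]
    rw [Finset.sum_congr rfl fun v _ => h1 v, Finset.sum_const_zero]
  have hdet2 : (1 + W * (Δ' * U)).det = 1 - (a:F) * α⁻¹ - (a:F) * (b:F) * (α⁻¹ * β⁻¹) := by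
    rw [Matrix.det_fin_two]
    simp only [Matrix.add_apply, Matrix.one_apply_eq, Matrix.one_apply_ne (by decide : (0 : Fin 2) ≠ 1),
      Matrix.one_apply_ne (by decide : (1 : Fin 2) ≠ 0), e00, e01, e10, e11]
    ring
  have lhs_eq : φ M.charpoly =
      α ^ a * β ^ b * (1 - (a:F) * α⁻¹ - (a:F) * (b:F) * (α⁻¹ * β⁻¹)) := by
    have hcp : M.charpoly = M.charmatrix.det := rfl
    rw [hcp, RingHom.map_det, RingHom.mapMatrix_apply, key, det_mul, hdetΔ, ← Matrix.mul_assoc,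
      Matrix.det_one_add_mul_comm, hdet2]
  rw [lhs_eq]
  have hq1 : φ (C (((a:ℝ)+b-2) + (a:ℝ) + (a:ℝ))) = ((a:F)+(b:F)-2) + (a:F) + (a:F) := by
    simp only [map_sub, map_add, map_natCast, _root_.map_ofNat]
  have hq2 : φ (C (((a:ℝ)+b-2)*(a:ℝ) + (a:ℝ)*(a:ℝ) - (a:ℝ)*(b:ℝ))) =
      ((a:F)+(b:F)-2)*(a:F) + (a:F)*(a:F) - (a:F)*(b:F) := by
    simp only [map_sub, map_add, _root_.map_mul, map_natCast, _root_.map_ofNat]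
  have hXa : φ (X - C ((a:ℝ))) = β := by rw [map_sub, hCa, ← hx, hβ]
  have hXab : φ (X - C ((a:ℝ)+(b:ℝ)-2)) = α := by rw [map_sub, hCab, ← hx, hα]
  have hXq : φ (X^2 - C (((a:ℝ)+b-2) + (a:ℝ) + (a:ℝ)) * X
      + C (((a:ℝ)+b-2)*(a:ℝ) + (a:ℝ)*(a:ℝ) - (a:ℝ)*(b:ℝ)))
      = α*β - (a:F)*β - (a:F)*(b:F) := by
    rw [map_add, map_sub, _root_.map_mul, map_pow, hq1, hq2, ← hx, hα, hβ]
    ring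
  rw [_root_.map_mul, _root_.map_mul, map_pow, map_pow, hXab, hXa, hXq]
  obtain ⟨a', rfl⟩ : ∃ a', a = a' + 1 := ⟨a - 1, (Nat.succ_pred_eq_of_pos ha1).symm⟩
  obtain ⟨b', rfl⟩ : ∃ b', b = b' + 1 := ⟨b - 1, (Nat.succ_pred_eq_of_pos hb1).symm⟩
  simp only [Nat.add_sub_cancel, pow_succ]
  push_cast
  linear_combination (-(α ^ a' * β ^ b') * ((a':F) + 1) * β - α ^ a' * β ^ b' * ((a':F) + 1) * ((b':F) + 1) * β * β⁻¹) * mul_inv_cancel₀ hαne + (-(α ^ a' * β ^ b') * ((a':F) + 1) * ((b':F) + 1)) * mul_inv_cancel₀ hβne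

section DihedralAux
variable (p m : ℕ) (hp : p.Prime) (hm : 2 ≤ m)



variable [NeZero (p ^ m)]

local notation "n" => p ^ m
local notation "G" => DihedralGroup (p ^ m)

include hp in
lemma dvd_char {d : ℕ} (hdvd : d ∣ p ^ m) : d ∣ p ↔ ¬ p ^ 2 ∣ d := by
  obtain ⟨k, hk, rfl⟩ := (Nat.dvd_prime_pow hp).mp hdvd
  have h1 : p ^ k ∣ p ↔ k ≤ 1 := by
    nth_rewrite 2 [← pow_one p]
    exact Nat.pow_dvd_pow_iff_le_right hp.one_lt
  have h2 : p ^ 2 ∣ p ^ k ↔ 2 ≤ k := Nat.pow_dvd_pow_iff_le_right hp.one_lt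
  rw [h1, h2]
  omega

lemma order_two_or_dvd (x : G) : orderOf x = 2 ∨ orderOf x ∣ n := by
  cases x with
  | r i => exact Or.inr (by rw [DihedralGroup.orderOf_r]; exact Nat.div_dvd_of_dvd (Nat.gcd_dvd_left _ _))
  | sr i => exact Or.inl (DihedralGroup.orderOf_sr i)

include hp in
lemma adj_iff {x y : G} (hxy : x ≠ y) :
    (pcGraph G).Adj x y ↔ (¬ p^2 ∣ orderOf x ∨ ¬ p^2 ∣ orderOf y) := by
  have hside : ∀ u v : G, ¬ p^2 ∣ orderOf u →
      (Nat.gcd (orderOf u) (orderOf v) = 1 ∨ (Nat.gcd (orderOf u) (orderOf v)).Prime) := by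
    intro u v hu
    rcases order_two_or_dvd p m u with h2 | hdvd
    · rw [h2]
      rcases (Nat.Prime.eq_one_or_self_of_dvd Nat.prime_two _
        (Nat.gcd_dvd_left 2 (orderOf v))) with h | h
      · exact Or.inl h
      · exact Or.inr (by rw [h]; exact Nat.prime_two)
    · have hup : orderOf u ∣ p := (dvd_char p m hp hdvd).mpr hu
      rcases (Nat.Prime.eq_one_or_self_of_dvd hp _
        ((Nat.gcd_dvd_left (orderOf u) (orderOf v)).trans hup)) with h | h
      · exact Or.inl h
      · exact Or.inr (by rw [h]; exact hp)
  show (x ≠ y ∧ _) ↔ _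
  constructor
  · rintro ⟨-, h⟩
    by_contra hc
    push_neg at hc
    obtain ⟨hx, hy⟩ := hc
    have hgcd : p ^ 2 ∣ Nat.gcd (orderOf x) (orderOf y) := Nat.dvd_gcd hx hy
    rcases h with h | h
    · rw [h] at hgcd
      have h1 := Nat.le_of_dvd one_pos hgcd
      have h2 : 2^2 ≤ p^2 := Nat.pow_le_pow_left hp.two_le 2
      omega
    · have hpq : p = Nat.gcd (orderOf x) (orderOf y) :=
        (Nat.prime_dvd_prime_iff_eq hp h).mp ((dvd_pow_self p two_ne_zero).trans hgcd)
      rw [← hpq] at hgcd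
      have h1 := Nat.le_of_dvd hp.pos hgcd
      nlinarith [hp.two_le]
  · rintro (h | h)
    · exact ⟨hxy, hside x y h⟩
    · exact ⟨hxy, by rw [Nat.gcd_comm]; exact hside y x h⟩

end DihedralAux

section Part2Aux
variable (p m : ℕ) (hp : p.Prime) (hm : 2 ≤ m) [NeZero (p ^ m)]
local notation "n" => p ^ m
local notation "G" => DihedralGroup (p ^ m)

include hp hm in
lemma P_r_iff (i : ZMod n) :
    (¬ p ^ 2 ∣ orderOf (DihedralGroup.r i)) ↔ p ^ (m - 1) ∣ i.val := by
  have hdvd : orderOf (DihedralGroup.r i) ∣ n := by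
    rw [DihedralGroup.orderOf_r]
    exact Nat.div_dvd_of_dvd (Nat.gcd_dvd_left _ _)
  rw [← dvd_char p m hp hdvd, orderOf_dvd_iff_pow_eq_one]
  have h1 : DihedralGroup.r i ^ p = DihedralGroup.r (((i.val * p : ℕ) : ZMod n)) := by
    calc DihedralGroup.r i ^ p = (DihedralGroup.r 1 ^ i.val) ^ p := by
          rw [DihedralGroup.r_one_pow, ZMod.natCast_rightInverse i]
      _ = DihedralGroup.r 1 ^ (i.val * p) := by rw [← pow_mul]
      _ = _ := DihedralGroup.r_one_pow _
  rw [h1, DihedralGroup.one_def]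
  have hnm : (p:ℕ) ^ m = p ^ (m - 1) * p := by
    rw [← pow_succ]
    congr 1
    omega
  rw [show (DihedralGroup.r (((i.val * p : ℕ) : ZMod n)) = DihedralGroup.r 0) ↔
      (((i.val * p : ℕ) : ZMod n) = 0) from ⟨fun h => DihedralGroup.r.inj h, fun h => by rw [h]⟩,
    ZMod.natCast_eq_zero_iff]
  constructor
  · intro h
    have h' : p ^ (m - 1) * p ∣ i.val * p := by
      rw [← hnm]
      exact h
    exact (Nat.mul_dvd_mul_iff_right hp.pos).mp h'
  · intro h
    have h' : p ^ (m - 1) * p ∣ i.val * p := Nat.mul_dvd_mul_right h p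
    rwa [← hnm] at h'

include hp hm in
lemma count_rot :
    ((Finset.univ : Finset (ZMod n)).filter (fun i => p ^ (m - 1) ∣ i.val)).card = p := by
  have hd : 0 < p ^ (m - 1) := pow_pos hp.pos _
  have hnm : (p:ℕ) ^ m = p ^ (m - 1) * p := by
    rw [← pow_succ]
    congr 1
    omega
  conv_rhs => rw [← Finset.card_range p]
  apply Finset.card_bij' (fun a _ => a.val / p ^ (m - 1))
    (fun b _ => ((b * p ^ (m - 1) : ℕ) : ZMod n))
  · intro a ha
    rw [Finset.mem_range, Nat.div_lt_iff_lt_mul hd]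
    have h1 := ZMod.val_lt a
    have h2 : p * p ^ (m - 1) = p ^ m := by rw [mul_comm, ← hnm]
    omega
  · intro b hb
    rw [Finset.mem_range] at hb
    have hlt : b * p ^ (m - 1) < n := by
      rw [hnm]
      calc b * p ^ (m-1) < p * p ^ (m-1) := by
            exact (Nat.mul_lt_mul_right hd).mpr hb
        _ = p ^ (m-1) * p := mul_comm _ _
    rw [Finset.mem_filter]
    refine ⟨Finset.mem_univ _, ?_⟩
    rw [ZMod.val_cast_of_lt hlt]
    exact ⟨b, mul_comm _ _⟩
  · intro a ha
    rw [Finset.mem_filter] at ha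
    rw [Nat.div_mul_cancel ha.2]
    exact ZMod.natCast_rightInverse a
  · intro b hb
    rw [Finset.mem_range] at hb
    have hlt : b * p ^ (m - 1) < n := by
      rw [hnm, mul_comm (p ^ (m-1)) p]
      exact (Nat.mul_lt_mul_right hd).mpr hb
    rw [ZMod.val_cast_of_lt hlt, Nat.mul_div_cancel _ hd]

include hp hm in
lemma count_A :
    ((Finset.univ : Finset G).filter (fun x => ¬ p ^ 2 ∣ orderOf x)).card = n + p := by
  have hp2 : ∀ i : ZMod n, ¬ p ^ 2 ∣ orderOf (DihedralGroup.sr i) := by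
    intro i hdvd
    rw [DihedralGroup.orderOf_sr] at hdvd
    have h1 := Nat.le_of_dvd two_pos hdvd
    have h2 : 2 ^ 2 ≤ p ^ 2 := Nat.pow_le_pow_left hp.two_le 2
    omega
  have hinj_r : Function.Injective (DihedralGroup.r : ZMod n → G) := by
    intro a b h
    simpa using h
  have hinj_sr : Function.Injective (DihedralGroup.sr : ZMod n → G) := by
    intro a b h
    simpa using h
  have huniv : (Finset.univ : Finset G) =
      (Finset.univ.image DihedralGroup.r) ∪ (Finset.univ.image DihedralGroup.sr) := by
    ext x
    simp only [Finset.mem_univ, true_iff, Finset.mem_union]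
    cases x with
    | r i => exact Or.inl (Finset.mem_image_of_mem _ (Finset.mem_univ i))
    | sr i => exact Or.inr (Finset.mem_image_of_mem _ (Finset.mem_univ i))
  have hdisj : Disjoint ((Finset.univ.image (DihedralGroup.r : ZMod n → G)).filter
      (fun x => ¬ p ^ 2 ∣ orderOf x))
      ((Finset.univ.image (DihedralGroup.sr : ZMod n → G)).filter
      (fun x => ¬ p ^ 2 ∣ orderOf x)) := by
    rw [Finset.disjoint_left]
    intro x hx hy
    rw [Finset.mem_filter, Finset.mem_image] at hx hy
    obtain ⟨⟨i, -, rfl⟩, -⟩ := hx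
    obtain ⟨⟨j, -, hj⟩, -⟩ := hy
    exact absurd hj (by simp)
  have hfilter : ((Finset.univ : Finset (ZMod n)).filter
      (fun i => ¬ p ^ 2 ∣ orderOf (DihedralGroup.r i)))
      = (Finset.univ : Finset (ZMod n)).filter (fun i => p ^ (m - 1) ∣ i.val) :=
    Finset.filter_congr (fun i _ => P_r_iff p m hp hm i)
  rw [huniv, Finset.filter_union, Finset.card_union_of_disjoint hdisj,
    Finset.filter_image, Finset.filter_image,
    Finset.card_image_of_injective _ hinj_r, Finset.card_image_of_injective _ hinj_sr,
    Finset.filter_true_of_mem (fun i _ => hp2 i), Finset.card_univ, ZMod.card,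
    hfilter, count_rot p m hp hm]
  omega

end Part2Aux


end Aux

/-- The characteristic polynomial of the signless Laplacian of the prime coprime graph
of the dihedral group of order 2p^m, for a prime p and m ≥ 2, with n = p^m. -/
theorem pcGraph_dihedral_prime_pow_signlessLaplacian_charpoly (p m : ℕ) (hp : p.Prime)
    (hm : 2 ≤ m) :
    haveI : NeZero (p ^ m) := ⟨pow_ne_zero m hp.pos.ne'⟩
    let n : ℕ := p ^ m
    (signlessLaplacian (DihedralGroup n) (pcGraph (DihedralGroup n))).charpoly =
      (X - C (2 * (n : ℝ) - 2)) ^ (n + p - 1) *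
      (X - C ((n : ℝ) + p)) ^ (n - p - 1) *
      (X ^ 2 - C (2 * (2 * (n : ℝ) + p - 1)) * X +
        C ((2 * (n : ℝ) + p - 1) ^ 2 - (2 * (n : ℝ) ^ 2 - 2 * n - (p : ℝ) ^ 2 + 1))) := by
  haveI : NeZero (p ^ m) := ⟨pow_ne_zero m hp.pos.ne'⟩
  intro n
  classical
  have hpn : p ≤ p ^ m := by
    calc p = p ^ 1 := (pow_one p).symm
      _ ≤ p ^ m := Nat.pow_le_pow_right hp.pos (by omega)
  have hplt : p < p ^ m := by
    calc p = p ^ 1 := (pow_one p).symm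
      _ < p ^ m := Nat.pow_lt_pow_right hp.one_lt (by omega)
  set G' := DihedralGroup (p ^ m) with hG'
  set P : G' → Prop := fun x => ¬ p ^ 2 ∣ orderOf x with hP
  -- cardinalities
  have hcardA : (Finset.univ.filter P).card = p ^ m + p := count_A p m hp hm
  have hcardU : Fintype.card G' = 2 * p ^ m := DihedralGroup.card
  have hcardB : (Finset.univ.filter (fun v => ¬ P v)).card = p ^ m - p := by
    have hsplit := Finset.card_filter_add_card_filter_not (s := (Finset.univ : Finset G')) (p := P)
    rw [Finset.card_univ, hcardU, hcardA] at hsplit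
    omega
  -- degrees
  have hdeg : ∀ v : G', (pcGraph G').degree v
      = if P v then 2 * p ^ m - 1 else p ^ m + p := by
    intro v
    have h1 : (pcGraph G').degree v
        = ((Finset.univ : Finset G').filter (fun y => (pcGraph G').Adj v y)).card := by
      rw [SimpleGraph.degree]
      congr 1
      ext y
      rw [SimpleGraph.mem_neighborFinset, Finset.mem_filter]
      simp
    by_cases hPv : P v
    · rw [if_pos hPv, h1]
      have h2 : (Finset.univ : Finset G').filter (fun y => (pcGraph G').Adj v y)
          = Finset.univ.erase v := by
        ext y
        rw [Finset.mem_filter, Finset.mem_erase]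
        constructor
        · rintro ⟨-, hadj⟩
          exact ⟨hadj.ne', Finset.mem_univ _⟩
        · rintro ⟨hne, -⟩
          exact ⟨Finset.mem_univ _, (adj_iff p m hp (Ne.symm hne)).mpr (Or.inl hPv)⟩
      rw [h2, Finset.card_erase_of_mem (Finset.mem_univ v), Finset.card_univ, hcardU]
    · rw [if_neg hPv, h1]
      have h2 : (Finset.univ : Finset G').filter (fun y => (pcGraph G').Adj v y)
          = Finset.univ.filter P := by
        ext y
        rw [Finset.mem_filter, Finset.mem_filter]
        constructor
        · rintro ⟨-, hadj⟩
          rcases (adj_iff p m hp hadj.ne).mp hadj with h | h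
          · exact absurd h hPv
          · exact ⟨Finset.mem_univ _, h⟩
        · rintro ⟨-, hPy⟩
          have hne : v ≠ y := by
            rintro rfl
            exact hPv hPy
          exact ⟨Finset.mem_univ _, (adj_iff p m hp hne).mpr (Or.inr hPy)⟩
      rw [h2, hcardA]
  -- matrix entries
  have hM : ∀ i j, signlessLaplacian G' (pcGraph G') i j =
      if i = j then (if P i then (((p^m+p:ℕ):ℝ)+((p^m-p:ℕ):ℝ)-1) else ((p^m+p:ℕ):ℝ))
      else if P i ∨ P j then 1 else 0 := by
    intro i j
    rw [signlessLaplacian]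
    rcases eq_or_ne i j with rfl | hne
    · rw [Matrix.of_apply, if_pos rfl, if_pos rfl, hdeg i]
      by_cases hPi : P i
      · rw [if_pos hPi, if_pos hPi]
        have h2n : (1:ℕ) ≤ 2 * p ^ m := by
          have := hp.pos
          omega
        have hc1 : ((2 * p ^ m - 1 : ℕ) : ℝ) = 2 * ((p ^ m : ℕ) : ℝ) - 1 := by
          push_cast [Nat.cast_sub h2n]
          ring
        rw [hc1]
        push_cast [Nat.cast_sub hpn]
        ring
      · rw [if_neg hPi, if_neg hPi]
    · rw [Matrix.of_apply, if_neg hne, if_neg hne]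
      by_cases h : P i ∨ P j
      · rw [if_pos ((adj_iff p m hp hne).mpr h), if_pos h]
      · rw [if_neg (fun hadj => h ((adj_iff p m hp hne).mp hadj)), if_neg h]
  -- constants
  have ha1 : 1 ≤ p ^ m + p := by omega
  have hb1 : 1 ≤ p ^ m - p := by omega
  have e1 : (2 * ((p^m : ℕ) : ℝ) - 2 : ℝ) = ((p^m+p : ℕ):ℝ) + ((p^m-p : ℕ):ℝ) - 2 := by
    push_cast [Nat.cast_sub hpn]
    ring
  have e2 : (((p^m : ℕ) : ℝ) + p) = ((p^m+p : ℕ):ℝ) := by push_cast; ring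
  have e3 : (2 * (2 * ((p^m : ℕ) : ℝ) + p - 1)) =
      ((((p^m+p:ℕ):ℝ)+((p^m-p:ℕ):ℝ)-2) + ((p^m+p:ℕ):ℝ) + ((p^m+p:ℕ):ℝ)) := by
    push_cast [Nat.cast_sub hpn]
    ring
  have e4 : ((2 * ((p^m : ℕ) : ℝ) + p - 1) ^ 2 - (2 * ((p^m : ℕ) : ℝ) ^ 2 - 2 * ((p^m : ℕ) : ℝ) - (p : ℝ) ^ 2 + 1)) =
      ((((p^m+p:ℕ):ℝ)+((p^m-p:ℕ):ℝ)-2)*((p^m+p:ℕ):ℝ) + ((p^m+p:ℕ):ℝ)*((p^m+p:ℕ):ℝ)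
        - ((p^m+p:ℕ):ℝ)*((p^m-p:ℕ):ℝ)) := by
    push_cast [Nat.cast_sub hpn]
    ring
  have hfinal := splitQ_charpoly P (p^m+p) (p^m-p) hcardA hcardB ha1 hb1 _ hM
  rw [← e4, ← e3, ← e1, ← e2] at hfinal
  exact hfinal
end
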